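/- arXiv:1112.5727 — 14 statements merged into one kernel-verified Lean document; each statement's English description precedes it below -/
import Mathlib

section
/- Let X be an infinite set and let FSym(X) denote the group of bijections f : X → X with finite support supp(f) = {x ∈ X : f(x) ≠ x}. Then FSym(X) is σ-discrete (a countable union of discrete subspaces) in every Hausdorff shift-invariant topology on FSym(X). -/
/-- The group of finitely supported bijections of `X`, as a subgroup of `Equiv.Perm X`. -/
def FSym (X : Type*) : Subgroup (Equiv.Perm X) where
  carrier := {f : Equiv.Perm X | {x : X | f x ≠ x}.Finite}
  mul_mem' := by
    intro a b ha hb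
    refine Set.Finite.subset (ha.union hb) ?_
    intro x hx
    simp only [Set.mem_setOf_eq, Equiv.Perm.mul_apply, Set.mem_union] at hx ⊢
    by_cases h : b x = x
    · exact Or.inl (by rwa [h] at hx)
    · exact Or.inr h
  one_mem' := by simp
  inv_mem' := by
    intro a ha
    have h : {x : X | a⁻¹ x ≠ x} = {x : X | a x ≠ x} := by
      ext x
      simp only [Set.mem_setOf_eq, ne_eq, not_iff_not]
      constructor
      · intro hx; nth_rewrite 1 [← hx]; exact a.apply_symm_apply x
      · intro hx; nth_rewrite 1 [← hx]; exact a.symm_apply_apply x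
    simp only [Set.mem_setOf_eq] at ha ⊢
    rw [h]
    exact ha

/-- A topological space (given by a topology `τ` on `S`) is σ-discrete if it is a countable
union of subspaces, each of which is discrete in its subspace topology. -/
def SigmaDiscrete {S : Type*} (τ : TopologicalSpace S) : Prop :=
  ∃ D : ℕ → Set S, (⋃ n, D n) = Set.univ ∧
    ∀ n, @DiscreteTopology (D n) (TopologicalSpace.induced Subtype.val τ)

section Aux

variable {X : Type*}

lemma mem_FSym_iff {g : Equiv.Perm X} : g ∈ FSym X ↔ {x : X | g x ≠ x}.Finite := Iff.rfl

/-- The support of an element of `FSym X`, as a set. -/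
def fsupp (g : ↥(FSym X)) : Set X := {x : X | (g : Equiv.Perm X) x ≠ x}

lemma fsupp_finite (g : ↥(FSym X)) : (fsupp g).Finite := g.2

lemma fsupp_mul_subset (g h : ↥(FSym X)) :
    fsupp (g * h) ⊆ fsupp g ∪ fsupp h := by
  intro x hx
  simp only [fsupp, Set.mem_setOf_eq, Subgroup.coe_mul, Equiv.Perm.mul_apply,
    Set.mem_union] at hx ⊢
  by_cases hh : (h : Equiv.Perm X) x = x
  · left; rwa [hh] at hx
  · right; exact hh

lemma fsupp_inv (g : ↥(FSym X)) : fsupp g⁻¹ = fsupp g := by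
  ext x
  simp only [fsupp, Set.mem_setOf_eq, Subgroup.coe_inv, ne_eq, not_iff_not]
  constructor
  · intro hx; nth_rewrite 1 [← hx]; exact (g : Equiv.Perm X).apply_symm_apply x
  · intro hx; nth_rewrite 1 [← hx]; exact (g : Equiv.Perm X).symm_apply_apply x

lemma fsupp_sub (f h : ↥(FSym X)) : fsupp h ⊆ fsupp f ∪ fsupp (f * h) := by
  have h1 := fsupp_mul_subset f⁻¹ (f * h)
  rw [inv_mul_cancel_left, fsupp_inv] at h1
  exact h1

lemma swap_mem_FSym [DecidableEq X] (a b : X) : Equiv.swap a b ∈ FSym X := by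
  rw [mem_FSym_iff]
  refine Set.Finite.subset ((Set.finite_singleton b).insert a) ?_
  intro x hx
  simp only [Set.mem_setOf_eq] at hx
  by_contra hmem
  simp only [Set.mem_insert_iff, Set.mem_singleton_iff, not_or] at hmem
  exact hx (Equiv.swap_apply_of_ne_of_ne hmem.1 hmem.2)

lemma conj_swap [DecidableEq X] {h : Equiv.Perm X} {x y t : X}
    (hxt : x ≠ t) (hyt : y ≠ t) (hx : h x = y) (ht : h t = t) :
    h * Equiv.swap x t = Equiv.swap y t * h := by
  ext z
  simp only [Equiv.Perm.mul_apply]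
  rcases eq_or_ne z x with rfl | hzx
  · rw [Equiv.swap_apply_left, ht, hx, Equiv.swap_apply_left]
  rcases eq_or_ne z t with rfl | hzt
  · rw [Equiv.swap_apply_right, hx, ht, Equiv.swap_apply_right]
  rw [Equiv.swap_apply_of_ne_of_ne hzx hzt, Equiv.swap_apply_of_ne_of_ne ?_ ?_]
  · intro hcon
    exact hzx (h.injective (hcon.trans hx.symm))
  · intro hcon
    exact hzt (h.injective (hcon.trans ht.symm))

/-- The key isolation lemma: in any Hausdorff shift-invariant topology on `FSym X`,
every element whose support has exactly `n` elements is isolated in the set of all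
such elements. -/
lemma fsym_isolated [Infinite X] (τ : TopologicalSpace ↥(FSym X))
    (hT2 : @T2Space ↥(FSym X) τ)
    (hleft : ∀ a : ↥(FSym X), @Continuous _ _ τ τ (fun x => a * x))
    (hright : ∀ a : ↥(FSym X), @Continuous _ _ τ τ (fun x => x * a))
    (n : ℕ) (f : ↥(FSym X)) (hf : (fsupp f).ncard = n) :
    ∃ U : Set ↥(FSym X), @IsOpen _ τ U ∧ f ∈ U ∧
      ∀ g ∈ U, (fsupp g).ncard = n → g = f := by
  classical
  letI := τ
  haveI := hT2
  by_contra hcon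
  push_neg at hcon
  set A : Set ↥(FSym X) := {g | (fsupp g).ncard = n ∧ g ≠ f} with hA
  have hne : (nhds f ⊓ Filter.principal A).NeBot := by
    rw [Filter.inf_principal_neBot_iff]
    intro U hU
    obtain ⟨V, hVU, hVopen, hfV⟩ := mem_nhds_iff.1 hU
    obtain ⟨g, hgV, hgcard, hgne⟩ := hcon V hVopen hfV
    exact ⟨g, hVU hgV, hgcard, hgne⟩
  haveI := hne
  set 𝒰₀ := Ultrafilter.of (nhds f ⊓ Filter.principal A) with h𝒰₀def
  have h𝒰₀ := Ultrafilter.of_le (nhds f ⊓ Filter.principal A)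
  set 𝒰 : Ultrafilter ↥(FSym X) := 𝒰₀.map (fun g => f⁻¹ * g) with h𝒰def
  -- 𝒰 converges to 1
  have hUle : (𝒰 : Filter ↥(FSym X)) ≤ nhds (1 : ↥(FSym X)) := by
    have h1 : (𝒰₀ : Filter ↥(FSym X)) ≤ nhds f := h𝒰₀.trans inf_le_left
    have h2 : Filter.Tendsto (fun g : ↥(FSym X) => f⁻¹ * g) (nhds f) (nhds 1) := by
      have h3 := (hleft f⁻¹).tendsto f
      rwa [inv_mul_cancel] at h3
    exact (Filter.map_mono h1).trans h2
  have hmemU : ∀ {s : Set ↥(FSym X)}, s ∈ nhds (1 : ↥(FSym X)) → s ∈ 𝒰 :=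
    fun hs => hUle hs
  -- the base set
  have hbase : {h : ↥(FSym X) | (fsupp (f * h)).ncard = n ∧ h ≠ 1} ∈ 𝒰 := by
    rw [h𝒰def, Ultrafilter.mem_map]
    have hAmem : A ∈ 𝒰₀ :=
      (h𝒰₀.trans inf_le_right) (Filter.mem_principal_self A)
    refine Filter.mem_of_superset hAmem ?_
    intro g hg
    simp only [Set.mem_preimage, Set.mem_setOf_eq]
    constructor
    · rw [mul_inv_cancel_left]; exact hg.1
    · intro h1
      exact hg.2 (inv_mul_eq_one.1 h1).symm
  -- closed equational sets
  have closedEq : ∀ E F : ↥(FSym X), ({z : ↥(FSym X) | z * E = F * z} ∈ 𝒰) → E = F := by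
    intro E F hC
    have hcl : IsClosed {z : ↥(FSym X) | z * E = F * z} :=
      isClosed_eq (hright E) (hleft F)
    have h1mem : (1 : ↥(FSym X)) ∈ closure {z : ↥(FSym X) | z * E = F * z} := by
      rw [mem_closure_iff_nhds]
      intro U hU
      exact Ultrafilter.nonempty_of_mem (Filter.inter_mem (hmemU hU) hC)
    rw [hcl.closure_eq] at h1mem
    simpa using h1mem
  -- no constant nontrivial destination
  have lemB : ∀ x y : X, x ≠ y → {h : ↥(FSym X) | (h : Equiv.Perm X) x = y} ∉ 𝒰 := by
    intro x y hxy hmem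
    have hcompl : (({x, y} : Set X)ᶜ).Infinite :=
      Set.Finite.infinite_compl ((Set.finite_singleton y).insert x)
    obtain ⟨T, hTsub, hTcard⟩ := hcompl.exists_subset_card_eq (2 * n + 1)
    have hpig : {h : ↥(FSym X) | (fsupp (f * h)).ncard = n ∧ h ≠ 1} ⊆
        ⋃ t ∈ (T : Set X), {h : ↥(FSym X) | (h : Equiv.Perm X) t = t} := by
      intro h hh
      by_contra hnot
      simp only [Set.mem_iUnion, not_exists, Set.mem_setOf_eq] at hnot
      have hTsupp : (T : Set X) ⊆ fsupp h := fun t ht => hnot t ht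
      have hb1 : (fsupp h).ncard ≤ 2 * n :=
        calc (fsupp h).ncard ≤ (fsupp f ∪ fsupp (f * h)).ncard :=
              Set.ncard_le_ncard (fsupp_sub f h)
                ((fsupp_finite f).union (fsupp_finite (f * h)))
          _ ≤ (fsupp f).ncard + (fsupp (f * h)).ncard := Set.ncard_union_le _ _
          _ = 2 * n := by rw [hf, hh.1]; ring
      have hb2 := Set.ncard_le_ncard hTsupp (fsupp_finite h)
      rw [Set.ncard_coe_finset, hTcard] at hb2
      omega
    have hUnion : (⋃ t ∈ (T : Set X), {h : ↥(FSym X) | (h : Equiv.Perm X) t = t}) ∈ 𝒰 :=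
      Filter.mem_of_superset hbase hpig
    obtain ⟨t, htT, hfix⟩ :=
      (Ultrafilter.finite_biUnion_mem_iff T.finite_toSet).1 hUnion
    have htxy : t ≠ x ∧ t ≠ y := by
      have h1 := hTsub htT
      simp only [Set.mem_compl_iff, Set.mem_insert_iff, Set.mem_singleton_iff, not_or] at h1
      exact h1
    have hxt : x ≠ t := fun hcon => htxy.1 hcon.symm
    have hyt : y ≠ t := fun hcon => htxy.2 hcon.symm
    set E : ↥(FSym X) := ⟨Equiv.swap x t, swap_mem_FSym x t⟩ with hE
    set F : ↥(FSym X) := ⟨Equiv.swap y t, swap_mem_FSym y t⟩ with hF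
    have hEF : E = F := by
      apply closedEq
      refine Filter.mem_of_superset (Filter.inter_mem hmem hfix) ?_
      intro h hh
      simp only [Set.mem_inter_iff, Set.mem_setOf_eq] at hh ⊢
      refine Subtype.ext ?_
      rw [Subgroup.coe_mul, Subgroup.coe_mul]
      exact conj_swap hxt hyt hh.1 hh.2
    have hswap : Equiv.swap x t = Equiv.swap y t := Subtype.ext_iff.1 hEF
    have : Equiv.swap x t t = Equiv.swap y t t := by rw [hswap]
    rw [Equiv.swap_apply_right, Equiv.swap_apply_right] at this
    exact hxy this
  -- the set of "free" points
  set Dset : Set X := {x : X | {h : ↥(FSym X) | (h : Equiv.Perm X) x = x} ∉ 𝒰} with hDset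
  have fresh : ∀ x ∈ Dset, ∀ B : Set X, B.Finite →
      {h : ↥(FSym X) | (h : Equiv.Perm X) x ∉ B} ∈ 𝒰 := by
    intro x hx B hB
    have hnotmem : {h : ↥(FSym X) | (h : Equiv.Perm X) x ∈ B} ∉ 𝒰 := by
      intro hmem
      have hU : (⋃ y ∈ B, {h : ↥(FSym X) | (h : Equiv.Perm X) x = y}) ∈ 𝒰 := by
        refine Filter.mem_of_superset hmem ?_
        intro h hh
        exact Set.mem_biUnion hh rfl
      obtain ⟨y, hyB, hy⟩ := (Ultrafilter.finite_biUnion_mem_iff hB).1 hU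
      rcases eq_or_ne x y with rfl | hxy
      · exact hx hy
      · exact lemB x y hxy hy
    have hcompl := Ultrafilter.compl_mem_iff_notMem.2 hnotmem
    refine Filter.mem_of_superset hcompl ?_
    intro h hh
    exact hh
  -- main case analysis
  by_cases hcase : ∃ x, x ∈ fsupp f ∩ Dset
  · -- some support point is free
    have hstep1 : (⋂ y ∈ (fsupp f \ Dset), {h : ↥(FSym X) | (h : Equiv.Perm X) y = y}) ∈ 𝒰 := by
      refine (Filter.biInter_mem ((fsupp_finite f).subset Set.diff_subset)).2 ?_
      intro y hy
      exact not_not.1 hy.2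
    have hstep2 : (⋂ x ∈ (fsupp f ∩ Dset),
        {h : ↥(FSym X) | (h : Equiv.Perm X) x ∉ fsupp f}) ∈ 𝒰 := by
      refine (Filter.biInter_mem ((fsupp_finite f).subset Set.inter_subset_left)).2 ?_
      intro x hx
      exact fresh x hx.2 _ (fsupp_finite f)
    obtain ⟨x₀, hx₀⟩ := hcase
    obtain ⟨h, hh⟩ := Ultrafilter.nonempty_of_mem
      (Filter.inter_mem hbase (Filter.inter_mem hstep1 hstep2))
    obtain ⟨⟨hcard, hne1⟩, hfixes, hmoves⟩ := hh
    have hfix' : ∀ y, y ∈ fsupp f → y ∉ Dset → (h : Equiv.Perm X) y = y := by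
      intro y h1 h2
      exact Set.mem_iInter₂.1 hfixes y ⟨h1, h2⟩
    have hmove' : ∀ x, x ∈ fsupp f → x ∈ Dset → (h : Equiv.Perm X) x ∉ fsupp f := by
      intro x h1 h2
      exact Set.mem_iInter₂.1 hmoves x ⟨h1, h2⟩
    set q : X := (h : Equiv.Perm X) x₀ with hq
    have hq_not : q ∉ fsupp f := hmove' x₀ hx₀.1 hx₀.2
    have hsub : fsupp f ⊆ fsupp (f * h) := by
      intro y hy
      by_cases hyD : y ∈ Dset
      · have hmy : (h : Equiv.Perm X) y ∉ fsupp f := hmove' y hy hyD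
        have h1 : (f : Equiv.Perm X) ((h : Equiv.Perm X) y) = (h : Equiv.Perm X) y :=
          not_not.1 hmy
        show ((f * h : ↥(FSym X)) : Equiv.Perm X) y ≠ y
        rw [Subgroup.coe_mul, Equiv.Perm.mul_apply, h1]
        intro heq
        exact hmy (by rw [heq]; exact hy)
      · have h1 := hfix' y hy hyD
        show ((f * h : ↥(FSym X)) : Equiv.Perm X) y ≠ y
        rw [Subgroup.coe_mul, Equiv.Perm.mul_apply, h1]
        exact hy
    have hq_mem : q ∈ fsupp (f * h) := by
      have hhq : (h : Equiv.Perm X) q ≠ q := by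
        intro heq
        have h1 : (h : Equiv.Perm X) x₀ = (h : Equiv.Perm X) q := by rw [heq]
        have h2 : x₀ = q := (h : Equiv.Perm X).injective h1
        exact hq_not (h2 ▸ hx₀.1)
      show ((f * h : ↥(FSym X)) : Equiv.Perm X) q ≠ q
      rw [Subgroup.coe_mul, Equiv.Perm.mul_apply]
      intro heq
      have hfq : (f : Equiv.Perm X) q = q := not_not.1 hq_not
      have h1 : (f : Equiv.Perm X) ((h : Equiv.Perm X) q) = (f : Equiv.Perm X) q := by
        rw [heq, hfq]
      exact hhq ((f : Equiv.Perm X).injective h1)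
    have hins : insert q (fsupp f) ⊆ fsupp (f * h) :=
      Set.insert_subset_iff.2 ⟨hq_mem, hsub⟩
    have h1 : (insert q (fsupp f)).ncard = n + 1 := by
      rw [Set.ncard_insert_of_notMem hq_not (fsupp_finite f), hf]
    have h2 : n + 1 ≤ n := by
      calc n + 1 = (insert q (fsupp f)).ncard := h1.symm
        _ ≤ (fsupp (f * h)).ncard := Set.ncard_le_ncard hins (fsupp_finite (f * h))
        _ = n := hcard
    omega
  · -- no support point is free: almost all h fix the support of f pointwise
    push_neg at hcase
    have hfixmem : ∀ y ∈ fsupp f, {h : ↥(FSym X) | (h : Equiv.Perm X) y = y} ∈ 𝒰 := by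
      intro y hy
      by_contra hnot
      exact hcase y ⟨hy, hnot⟩
    have hstep : (⋂ y ∈ fsupp f, {h : ↥(FSym X) | (h : Equiv.Perm X) y = y}) ∈ 𝒰 :=
      (Filter.biInter_mem (fsupp_finite f)).2 hfixmem
    obtain ⟨h, hh⟩ := Ultrafilter.nonempty_of_mem (Filter.inter_mem hbase hstep)
    obtain ⟨⟨hcard, hne1⟩, hfixes⟩ := hh
    have hfix' : ∀ y ∈ fsupp f, (h : Equiv.Perm X) y = y :=
      fun y hy => Set.mem_iInter₂.1 hfixes y hy
    have hz : ∃ z, (h : Equiv.Perm X) z ≠ z := by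
      by_contra hzc
      push_neg at hzc
      apply hne1
      refine Subtype.ext ?_
      rw [OneMemClass.coe_one]
      exact Equiv.ext fun z => (hzc z).trans rfl
    obtain ⟨z, hzmove⟩ := hz
    have hzf : z ∉ fsupp f := fun hmem => hzmove (hfix' z hmem)
    have hhz_not : (h : Equiv.Perm X) z ∉ fsupp f := by
      intro hmem
      have h1 : (h : Equiv.Perm X) ((h : Equiv.Perm X) z) = (h : Equiv.Perm X) z :=
        hfix' ((h : Equiv.Perm X) z) hmem
      exact hzmove ((h : Equiv.Perm X).injective h1)
    have hz_mem : z ∈ fsupp (f * h) := by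
      show ((f * h : ↥(FSym X)) : Equiv.Perm X) z ≠ z
      rw [Subgroup.coe_mul, Equiv.Perm.mul_apply, not_not.1 hhz_not]
      exact hzmove
    have hsub : fsupp f ⊆ fsupp (f * h) := by
      intro y hy
      show ((f * h : ↥(FSym X)) : Equiv.Perm X) y ≠ y
      rw [Subgroup.coe_mul, Equiv.Perm.mul_apply, hfix' y hy]
      exact hy
    have hins : insert z (fsupp f) ⊆ fsupp (f * h) :=
      Set.insert_subset_iff.2 ⟨hz_mem, hsub⟩
    have h1 : (insert z (fsupp f)).ncard = n + 1 := by
      rw [Set.ncard_insert_of_notMem hzf (fsupp_finite f), hf]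
    have h2 : n + 1 ≤ n := by
      calc n + 1 = (insert z (fsupp f)).ncard := h1.symm
        _ ≤ (fsupp (f * h)).ncard := Set.ncard_le_ncard hins (fsupp_finite (f * h))
        _ = n := hcard
    omega

end Aux

/-- For an infinite set `X`, the group `FSym X` of finitely supported bijections of `X` is
σ-discrete in every Hausdorff shift-invariant topology. -/
theorem fsym_sigmaDiscrete_of_hausdorff_shift_invariant
    {X : Type*} [Infinite X] (τ : TopologicalSpace ↥(FSym X))
    (hT2 : @T2Space ↥(FSym X) τ)
    (hleft : ∀ a : ↥(FSym X), @Continuous _ _ τ τ (fun x => a * x))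
    (hright : ∀ a : ↥(FSym X), @Continuous _ _ τ τ (fun x => x * a)) :
    SigmaDiscrete τ := by
  classical
  letI := τ
  haveI := hT2
  refine ⟨fun n => {g : ↥(FSym X) | (fsupp g).ncard = n}, ?_, ?_⟩
  · ext g
    simp only [Set.mem_iUnion, Set.mem_univ, iff_true, Set.mem_setOf_eq]
    exact ⟨(fsupp g).ncard, rfl⟩
  · intro n
    have hopen : ∀ a : ↥{g : ↥(FSym X) | (fsupp g).ncard = n}, IsOpen {a} := by
      rintro ⟨g, hg⟩
      obtain ⟨U, hUopen, hgU, hUniq⟩ := fsym_isolated τ hT2 hleft hright n g hg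
      have heq : (Subtype.val ⁻¹' U : Set ↥{g : ↥(FSym X) | (fsupp g).ncard = n}) =
          {⟨g, hg⟩} := by
        ext ⟨g', hg'⟩
        simp only [Set.mem_preimage, Set.mem_singleton_iff, Subtype.mk.injEq]
        exact ⟨fun hU => hUniq g' hU hg', fun he => he ▸ hgU⟩
      rw [← heq]
      exact hUopen.preimage continuous_subtype_val
    exact discreteTopology_iff_isOpen_singleton.2 hopen
end

section
/- Let X be an infinite set and let FSym(X) denote the group of bijections f : X → X with finite support supp(f) = {x ∈ X : f(x) ≠ x}. Then every Baire Hausdorff shift-invariant topology on FSym(X) is discrete. -/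
namespace FSymProof

variable {X : Type*}

/-- support of a permutation, as a set -/
def psupp (f : Equiv.Perm X) : Set X := {x | f x ≠ x}

lemma mem_psupp {f : Equiv.Perm X} {x : X} : x ∈ psupp f ↔ f x ≠ x := Iff.rfl

lemma psupp_apply_mem {f : Equiv.Perm X} {x : X} (h : x ∈ psupp f) : f x ∈ psupp f := by
  simp only [mem_psupp, ne_eq] at h ⊢
  intro he
  exact h (f.injective he)

lemma psupp_one : psupp (1 : Equiv.Perm X) = ∅ := by
  ext x; simp [psupp]

lemma psupp_mul_subset (f g : Equiv.Perm X) : psupp (f * g) ⊆ psupp f ∪ psupp g := by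
  intro x hx
  by_contra hc
  simp only [Set.mem_union, mem_psupp, ne_eq, not_or, not_not] at hc
  simp only [mem_psupp, Equiv.Perm.mul_apply, hc.2, hc.1, ne_eq, not_true] at hx

lemma psupp_inv (f : Equiv.Perm X) : psupp f⁻¹ = psupp f := by
  ext x
  simp only [mem_psupp, ne_eq, not_iff_not]
  rw [Equiv.Perm.inv_eq_iff_eq, eq_comm]

lemma eq_one_of_psupp_empty {f : Equiv.Perm X} (h : psupp f = ∅) : f = 1 := by
  ext x
  have := Set.eq_empty_iff_forall_notMem.mp h x
  simp only [mem_psupp, ne_eq, not_not] at this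
  simpa using this

lemma psupp_nonempty_of_ne_one {f : Equiv.Perm X} (h : f ≠ 1) : (psupp f).Nonempty := by
  rcases Set.eq_empty_or_nonempty (psupp f) with he | hne
  · exact absurd (eq_one_of_psupp_empty he) h
  · exact hne

lemma mem_FSym_iff {f : Equiv.Perm X} : f ∈ FSym X ↔ (psupp f).Finite := Iff.rfl

lemma psupp_finite (u : ↥(FSym X)) : (psupp (u : Equiv.Perm X)).Finite := u.2

lemma psupp_swap_subset [DecidableEq X] (a b : X) : psupp (Equiv.swap a b) ⊆ {a, b} := by
  intro x hx
  by_contra hc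
  simp only [Set.mem_insert_iff, Set.mem_singleton_iff, not_or] at hc
  exact hx (Equiv.swap_apply_of_ne_of_ne hc.1 hc.2)

lemma commute_of_disjoint_psupp {f g : Equiv.Perm X}
    (h : Disjoint (psupp f) (psupp g)) : f * g = g * f := by
  ext x
  simp only [Equiv.Perm.mul_apply]
  by_cases hf : x ∈ psupp f
  · have hg : x ∉ psupp g := fun hx => (Set.disjoint_left.mp h hf) hx
    have hg' : f x ∉ psupp g := fun hx => (Set.disjoint_left.mp h (psupp_apply_mem hf)) hx
    simp only [mem_psupp, not_not, ne_eq] at hg hg'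
    rw [hg, hg']
  · by_cases hg : x ∈ psupp g
    · have hf' : g x ∉ psupp f := fun hx => (Set.disjoint_right.mp h (psupp_apply_mem hg)) hx
      simp only [mem_psupp, not_not, ne_eq] at hf hf'
      rw [hf, hf']
    · simp only [mem_psupp, not_not, ne_eq] at hf hg
      simp only [hf, hg]

open Classical in
/-- the function swapping two disjoint sets along an equivalence -/
noncomputable def swapFun (s t : Set X) (e : ↥s ≃ ↥t) (x : X) : X :=
  if h : x ∈ s then (e ⟨x, h⟩ : X) else if h : x ∈ t then (e.symm ⟨x, h⟩ : X) else x

lemma swapFun_involutive (s t : Set X) (e : ↥s ≃ ↥t) (hst : Disjoint s t) :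
    Function.Involutive (swapFun s t e) := by
  intro x
  by_cases hs : x ∈ s
  · have h1 : swapFun s t e x = (e ⟨x, hs⟩ : X) := dif_pos hs
    have ht : (e ⟨x, hs⟩ : X) ∈ t := (e ⟨x, hs⟩).2
    have hns : (e ⟨x, hs⟩ : X) ∉ s := fun hc => Set.disjoint_left.mp hst hc ht
    rw [h1]
    rw [swapFun, dif_neg hns, dif_pos ht]
    simp
  · by_cases ht : x ∈ t
    · have h1 : swapFun s t e x = (e.symm ⟨x, ht⟩ : X) := by
        rw [swapFun, dif_neg hs, dif_pos ht]
      have hs' : (e.symm ⟨x, ht⟩ : X) ∈ s := (e.symm ⟨x, ht⟩).2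
      rw [h1, swapFun, dif_pos hs']
      simp
    · have h1 : swapFun s t e x = x := by rw [swapFun, dif_neg hs, dif_neg ht]
      rw [h1, h1]

/-- the permutation swapping two disjoint sets -/
noncomputable def swapPerm (s t : Set X) (e : ↥s ≃ ↥t) (hst : Disjoint s t) : Equiv.Perm X :=
  (swapFun_involutive s t e hst).toPerm

lemma swapPerm_mem_of_mem {s t : Set X} {e : ↥s ≃ ↥t} {hst : Disjoint s t} {x : X}
    (hx : x ∈ s) : swapPerm s t e hst x ∈ t := by
  have : swapPerm s t e hst x = (e ⟨x, hx⟩ : X) := dif_pos hx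
  rw [this]; exact (e ⟨x, hx⟩).2

lemma swapPerm_psupp_subset {s t : Set X} {e : ↥s ≃ ↥t} {hst : Disjoint s t} :
    psupp (swapPerm s t e hst) ⊆ s ∪ t := by
  intro x hx
  by_contra hc
  simp only [Set.mem_union, not_or] at hc
  have : swapPerm s t e hst x = x := by
    show swapFun s t e x = x
    rw [swapFun, dif_neg hc.1, dif_neg hc.2]
  exact hx this

/-- there is a finitely supported permutation moving A off a given finite set C -/
lemma exists_avoid [Infinite X] (A C : Set X) (hA : A.Finite) (hC : C.Finite) :
    ∃ h : ↥(FSym X), Disjoint (((h : Equiv.Perm X)) '' A) C := by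
  have hinf : ((A ∪ C)ᶜ : Set X).Infinite := (hA.union hC).infinite_compl
  haveI := hA.fintype
  obtain ⟨B, hBsub, hBcard⟩ := hinf.exists_subset_card_eq (Fintype.card ↥A)
  have hcards : Fintype.card ↥A = Fintype.card ↥(B : Set X) := by
    simp only [Finset.coe_sort_coe, Fintype.card_coe, hBcard]
  have hdisj : Disjoint A (B : Set X) := by
    rw [Set.disjoint_right]
    intro x hxB hxA
    exact hBsub hxB (Set.mem_union_left _ hxA)
  let e : ↥A ≃ ↥(B : Set X) := Fintype.equivOfCardEq hcards
  have hmem : swapPerm A (B : Set X) e hdisj ∈ FSym X := by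
    rw [mem_FSym_iff]
    exact (hA.union B.finite_toSet).subset swapPerm_psupp_subset
  refine ⟨⟨swapPerm A (B : Set X) e hdisj, hmem⟩, ?_⟩
  rw [Set.disjoint_left]
  rintro y ⟨x, hxA, rfl⟩ hyC
  have : swapPerm A (B : Set X) e hdisj x ∈ (B : Set X) := swapPerm_mem_of_mem hxA
  exact hBsub this (Set.mem_union_right _ hyC)
lemma exists_family [Infinite X] (A : Set X) (hA : A.Finite) (m : ℕ) :
    ∃ g : ℕ → ↥(FSym X),
      (∀ i < m, Disjoint (((g i : Equiv.Perm X)) '' A) A) ∧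
      (∀ i < m, ∀ j < m, i ≠ j →
        Disjoint (((g i : Equiv.Perm X)) '' A) (((g j : Equiv.Perm X)) '' A)) := by
  induction m with
  | zero => exact ⟨fun _ => 1, fun i hi => absurd hi (by omega), fun i hi => absurd hi (by omega)⟩
  | succ m ih =>
    obtain ⟨g, h1, h2⟩ := ih
    have hC : (A ∪ ⋃ i ∈ Finset.range m, ((g i : Equiv.Perm X)) '' A).Finite := by
      apply hA.union
      apply Set.Finite.biUnion (Finset.finite_toSet _)
      intro i _
      exact hA.image _
    obtain ⟨h, hh⟩ := exists_avoid A _ hA hC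
    have hhA : Disjoint (((h : Equiv.Perm X)) '' A) A :=
      hh.mono_right (Set.subset_union_left)
    have hhj : ∀ j < m, Disjoint (((h : Equiv.Perm X)) '' A) (((g j : Equiv.Perm X)) '' A) := by
      intro j hj
      refine hh.mono_right (le_trans ?_ Set.subset_union_right)
      intro y hy
      exact Set.mem_biUnion (Finset.mem_range.mpr hj) hy
    refine ⟨Function.update g m h, ?_, ?_⟩
    · intro i hi
      rcases eq_or_ne i m with rfl | hne
      · rwa [Function.update_self]
      · rw [Function.update_of_ne hne]
        exact h1 i (by omega)
    · intro i hi j hj hij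
      rcases eq_or_ne i m with rfl | hnei
      · rw [Function.update_self, Function.update_of_ne (Ne.symm hij)]
        exact hhj j (by omega)
      · rw [Function.update_of_ne hnei]
        rcases eq_or_ne j m with rfl | hnej
        · rw [Function.update_self]
          exact (hhj i (by omega)).symm
        · rw [Function.update_of_ne hnej]
          exact h2 i (by omega) j (by omega) hij

def Sn (X : Type*) (n : ℕ) : Set ↥(FSym X) := {f | (psupp (f : Equiv.Perm X)).ncard ≤ n}

/-- algebraic characterization of `Sn`, making it closed in any Hausdorff
shift-invariant topology -/
lemma Sn_eq [Infinite X] (n : ℕ) : Sn X n =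
    ⋂ (g : {g : Fin (n+1) → ↥(FSym X) // (∀ i, g i ≠ 1) ∧
      (∀ i j, i ≠ j → Disjoint (psupp ((g i : Equiv.Perm X))) (psupp ((g j : Equiv.Perm X))))}),
    ⋃ i, {f : ↥(FSym X) | (g.1 i) * f = f * (g.1 i)} := by
  classical
  apply Set.Subset.antisymm
  · intro f hf
    simp only [Set.mem_iInter]
    rintro ⟨g, hg1, hg2⟩
    have : ∃ i, Disjoint (psupp ((g i : Equiv.Perm X))) (psupp ((f : Equiv.Perm X))) := by
      by_contra hc
      push_neg at hc
      choose x hx1 hx2 using fun i => Set.not_disjoint_iff.mp (hc i)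
      have hinj : Function.Injective x := by
        intro i j hij
        by_contra hne
        exact Set.disjoint_left.mp (hg2 i j hne) (hx1 i) (hij ▸ hx1 j)
      have hcard : n + 1 ≤ (psupp (f : Equiv.Perm X)).ncard := by
        rw [Set.ncard_eq_toFinset_card _ (psupp_finite f)]
        calc n + 1 = (Finset.univ : Finset (Fin (n+1))).card := by simp
        _ ≤ ((psupp_finite f).toFinset).card := by
            apply Finset.card_le_card_of_injOn x
            · intro i _
              exact (psupp_finite f).mem_toFinset.mpr (hx2 i)
            · exact hinj.injOn
      exact absurd hf (by simp only [Sn, Set.mem_setOf_eq]; omega)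
    obtain ⟨i, hi⟩ := this
    refine Set.mem_iUnion.mpr ⟨i, ?_⟩
    simp only [Set.mem_setOf_eq]
    have := commute_of_disjoint_psupp hi
    ext : 1
    push_cast
    exact this
  · intro f hf
    by_contra hn
    simp only [Sn, Set.mem_setOf_eq, not_le] at hn
    have hfin := psupp_finite f
    obtain ⟨xs, hxs, hxscard⟩ :=
      Finset.exists_subset_card_eq (s := hfin.toFinset) (n := n + 1)
        (by rw [← Set.ncard_eq_toFinset_card _ hfin]; omega)
    obtain ⟨ys, hys, hyscard⟩ := (hfin.infinite_compl).exists_subset_card_eq (n + 1)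
    set a : Fin (n+1) → X := fun i => ((Finset.equivFinOfCardEq hxscard).symm i : X) with ha
    set b : Fin (n+1) → X := fun i => ((Finset.equivFinOfCardEq hyscard).symm i : X) with hb
    have hax : ∀ i, a i ∈ psupp (f : Equiv.Perm X) := by
      intro i
      have : ((Finset.equivFinOfCardEq hxscard).symm i : X) ∈ xs :=
        ((Finset.equivFinOfCardEq hxscard).symm i).2
      exact hfin.mem_toFinset.mp (hxs this)
    have hby : ∀ i, b i ∉ psupp (f : Equiv.Perm X) := by
      intro i
      have : ((Finset.equivFinOfCardEq hyscard).symm i : X) ∈ ys :=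
        ((Finset.equivFinOfCardEq hyscard).symm i).2
      exact hys this
    have hainj : Function.Injective a := by
      intro i j hij
      have := Subtype.ext hij
      simpa using (Finset.equivFinOfCardEq hxscard).symm.injective this
    have hbinj : Function.Injective b := by
      intro i j hij
      have := Subtype.ext hij
      simpa using (Finset.equivFinOfCardEq hyscard).symm.injective this
    have hab : ∀ i j, a i ≠ b j := by
      intro i j h
      exact hby j (h ▸ hax i)
    have hmemg : ∀ i, Equiv.swap (a i) (b i) ∈ FSym X := by
      intro i
      rw [mem_FSym_iff]
      exact Set.Finite.subset ((Set.finite_singleton _).insert _)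
        (psupp_swap_subset (a i) (b i))
    set g : Fin (n+1) → ↥(FSym X) := fun i => ⟨Equiv.swap (a i) (b i), hmemg i⟩ with hgdef
    have hg1 : ∀ i, g i ≠ 1 := by
      intro i h
      have h2 : (g i : Equiv.Perm X) = 1 := by rw [h]; rfl
      have := congrArg (fun e : Equiv.Perm X => e (a i)) h2
      simp only [hgdef, Equiv.swap_apply_left, Equiv.Perm.one_apply] at this
      exact hab i i this.symm
    have hg2 : ∀ i j, i ≠ j →
        Disjoint (psupp ((g i : Equiv.Perm X))) (psupp ((g j : Equiv.Perm X))) := by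
      intro i j hij
      have hsub1 := psupp_swap_subset (a i) (b i)
      have hsub2 := psupp_swap_subset (a j) (b j)
      rw [Set.disjoint_left]
      intro x hx1 hx2
      have m1 : x ∈ ({a i, b i} : Set X) := hsub1 hx1
      have m2 : x ∈ ({a j, b j} : Set X) := hsub2 hx2
      simp only [Set.mem_insert_iff, Set.mem_singleton_iff] at m1 m2
      rcases m1 with rfl | rfl <;> rcases m2 with h | h
      · exact hij (hainj h)
      · exact hab i j h
      · exact hab j i h.symm
      · exact hij (hbinj h)
    have hmem := Set.mem_iInter.mp hf ⟨g, hg1, hg2⟩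
    obtain ⟨i, hi⟩ := Set.mem_iUnion.mp hmem
    simp only [Set.mem_setOf_eq] at hi
    have hcoe : (g i : Equiv.Perm X) * (f : Equiv.Perm X)
        = (f : Equiv.Perm X) * (g i : Equiv.Perm X) := by
      exact_mod_cast congrArg (fun u : ↥(FSym X) => (u : Equiv.Perm X)) hi
    have hfb : (f : Equiv.Perm X) (b i) = b i := not_not.mp (hby i)
    have key : Equiv.swap (a i) (b i) ((f : Equiv.Perm X) (b i)) =
        (f : Equiv.Perm X) (Equiv.swap (a i) (b i) (b i)) := by
      have := congrArg (fun e : Equiv.Perm X => e (b i)) hcoe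
      simpa [hgdef] using this
    rw [hfb, Equiv.swap_apply_right] at key
    exact hax i key.symm

end FSymProof


open FSymProof in
/-- For an infinite set `X`, every Baire Hausdorff shift-invariant topology on the group
`FSym X` of finitely supported bijections of `X` is discrete. -/
theorem fsym_discrete_of_baire_hausdorff_shift_invariant
    {X : Type*} [Infinite X] (τ : TopologicalSpace ↥(FSym X))
    (hT2 : @T2Space ↥(FSym X) τ)
    (hleft : ∀ a : ↥(FSym X), @Continuous _ _ τ τ (fun x => a * x))
    (hright : ∀ a : ↥(FSym X), @Continuous _ _ τ τ (fun x => x * a))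
    (hBaire : ∀ U : ℕ → Set ↥(FSym X), (∀ n, @IsOpen _ τ (U n)) → (∀ n, @Dense _ τ (U n)) →
      @Dense _ τ (⋂ n, U n)) :
    @DiscreteTopology ↥(FSym X) τ := by
  classical
  letI := τ
  haveI : T2Space ↥(FSym X) := hT2
  have hSclosed : ∀ n, IsClosed (Sn X n) := by
    intro n
    rw [Sn_eq]
    refine isClosed_iInter fun g => isClosed_iUnion_of_finite fun i => ?_
    exact isClosed_eq (hleft (g.1 i)) (hright (g.1 i))
  have hexists : ∃ n, (interior (Sn X n)).Nonempty := by
    by_contra hc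
    push_neg at hc
    have hop : ∀ n, IsOpen (Sn X n)ᶜ := fun n => (hSclosed n).isOpen_compl
    have hdense : ∀ n, Dense (Sn X n)ᶜ := by
      intro n
      rw [← interior_eq_empty_iff_dense_compl]
      exact hc n
    have hd := hBaire _ hop hdense
    have hempty : (⋂ n, (Sn X n)ᶜ) = (∅ : Set ↥(FSym X)) := by
      rw [← Set.compl_iUnion]
      have huniv : (⋃ n, Sn X n) = Set.univ := by
        ext f
        simp only [Set.mem_iUnion, Set.mem_univ, iff_true]
        exact ⟨(psupp (f : Equiv.Perm X)).ncard, by simp [Sn]⟩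
      rw [huniv, Set.compl_univ]
    rw [hempty] at hd
    haveI : Nonempty ↥(FSym X) := ⟨1⟩
    exact Set.not_nonempty_empty hd.nonempty
  have hn₀ : (interior (Sn X (Nat.find hexists))).Nonempty := Nat.find_spec hexists
  set n₀ := Nat.find hexists with hn₀def
  have hmin : ∀ k, k < n₀ → interior (Sn X k) = ∅ := fun k hk =>
    Set.not_nonempty_iff_eq_empty.mp (Nat.find_min hexists hk)
  suffices hone : IsOpen ({1} : Set ↥(FSym X)) by
    rw [discreteTopology_iff_isOpen_singleton]
    intro a
    have hset : ({a} : Set ↥(FSym X)) = (fun x => a⁻¹ * x) ⁻¹' {1} := by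
      ext x
      simp only [Set.mem_singleton_iff, Set.mem_preimage, inv_mul_eq_one, eq_comm]
    rw [hset]
    exact (hleft a⁻¹).isOpen_preimage _ hone
  rcases Nat.eq_zero_or_pos n₀ with h0 | hpos
  · rw [h0] at hn₀
    have hsub : Sn X 0 ⊆ {1} := by
      intro f hf
      simp only [Sn, Set.mem_setOf_eq, nonpos_iff_eq_zero] at hf
      have hemp : psupp (f : Equiv.Perm X) = ∅ :=
        (Set.ncard_eq_zero (psupp_finite f)).mp hf
      have hf1 : (f : Equiv.Perm X) = 1 := eq_one_of_psupp_empty hemp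
      exact Set.mem_singleton_iff.mpr (by exact_mod_cast hf1)
    have h1mem : (1 : ↥(FSym X)) ∈ interior (Sn X 0) := by
      obtain ⟨x, hx⟩ := hn₀
      have hx1 := hsub (interior_subset hx)
      simp only [Set.mem_singleton_iff] at hx1
      rwa [hx1] at hx
    have heq : interior (Sn X 0) = {1} :=
      Set.Subset.antisymm (interior_subset.trans hsub) (Set.singleton_subset_iff.mpr h1mem)
    rw [← heq]
    exact isOpen_interior
  · set V := interior (Sn X n₀) with hV
    have hVopen : IsOpen V := isOpen_interior
    have hVsub : V ⊆ Sn X n₀ := interior_subset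
    have hVne : ¬ V ⊆ Sn X (n₀ - 1) := by
      intro hcon
      have hsub2 : V ⊆ interior (Sn X (n₀ - 1)) := interior_maximal hcon hVopen
      rw [hmin _ (by omega)] at hsub2
      exact Set.not_nonempty_empty (hn₀.mono hsub2)
    obtain ⟨f₀, hf₀V, hf₀n⟩ := Set.not_subset.mp hVne
    have hAfin : (psupp (f₀ : Equiv.Perm X)).Finite := psupp_finite f₀
    set A := psupp (f₀ : Equiv.Perm X) with hAdef
    have hAcard : A.ncard = n₀ := by
      have h1 : A.ncard ≤ n₀ := hVsub hf₀V
      have h2 : ¬ A.ncard ≤ n₀ - 1 := hf₀n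
      omega
    set U := (fun x => x * f₀) ⁻¹' V with hU
    have hUopen : IsOpen U := (hright f₀).isOpen_preimage _ hVopen
    have hU1 : (1 : ↥(FSym X)) ∈ U := by
      simp only [hU, Set.mem_preimage, one_mul]
      exact hf₀V
    have hUcard : ∀ u ∈ U, (psupp (u : Equiv.Perm X)).ncard ≤ 2 * n₀ := by
      intro u hu
      have huf : u * f₀ ∈ Sn X n₀ := hVsub hu
      have hcoe : (u : Equiv.Perm X) = ((u * f₀ : ↥(FSym X)) : Equiv.Perm X) *
          ((f₀ : Equiv.Perm X))⁻¹ := by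
        push_cast
        group
      have hsub : psupp (u : Equiv.Perm X) ⊆
          psupp ((u * f₀ : ↥(FSym X)) : Equiv.Perm X) ∪ A := by
        rw [hcoe]
        refine (psupp_mul_subset _ _).trans ?_
        rw [psupp_inv]
      calc (psupp (u : Equiv.Perm X)).ncard
          ≤ (psupp ((u * f₀ : ↥(FSym X)) : Equiv.Perm X) ∪ A).ncard :=
            Set.ncard_le_ncard hsub ((psupp_finite (u * f₀)).union hAfin)
        _ ≤ (psupp ((u * f₀ : ↥(FSym X)) : Equiv.Perm X)).ncard + A.ncard :=
            Set.ncard_union_le _ _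
        _ ≤ 2 * n₀ := by
            have := huf
            simp only [Sn, Set.mem_setOf_eq] at this
            omega
    have hUmeet : ∀ u ∈ U, u ≠ 1 → (psupp (u : Equiv.Perm X) ∩ A).Nonempty := by
      intro u hu hne
      by_contra hc
      have hcempty : psupp (u : Equiv.Perm X) ∩ A = ∅ := Set.not_nonempty_iff_eq_empty.mp hc
      have hdisj : ∀ x, x ∈ psupp (u : Equiv.Perm X) → x ∉ A := by
        intro x hx hxA
        exact absurd (Set.mem_inter hx hxA) (hcempty ▸ Set.notMem_empty x)
      have hune : (u : Equiv.Perm X) ≠ 1 := by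
        intro h
        exact hne (by exact_mod_cast h)
      obtain ⟨b, hb⟩ := psupp_nonempty_of_ne_one hune
      have hbA : b ∉ A := hdisj b hb
      have hsub : insert b A ⊆ psupp ((u * f₀ : ↥(FSym X)) : Equiv.Perm X) := by
        intro x hx
        have hcoe : ((u * f₀ : ↥(FSym X)) : Equiv.Perm X) x =
            (u : Equiv.Perm X) ((f₀ : Equiv.Perm X) x) := by
          push_cast
          simp [Equiv.Perm.mul_apply]
        rcases Set.mem_insert_iff.mp hx with rfl | hxA
        · have hfb : (f₀ : Equiv.Perm X) x = x := not_not.mp hbA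
          rw [mem_psupp, hcoe, hfb]
          exact hb
        · have hfx : (f₀ : Equiv.Perm X) x ∈ A := psupp_apply_mem hxA
          have hufx : (u : Equiv.Perm X) ((f₀ : Equiv.Perm X) x) = (f₀ : Equiv.Perm X) x := by
            by_contra hcc
            exact hdisj _ hcc hfx
          rw [mem_psupp, hcoe, hufx]
          exact hxA
      have hcard1 : (insert b A).ncard = n₀ + 1 := by
        rw [Set.ncard_insert_of_notMem hbA hAfin, hAcard]
      have hcard2 : (insert b A).ncard ≤ (psupp ((u * f₀ : ↥(FSym X)) : Equiv.Perm X)).ncard :=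
        Set.ncard_le_ncard hsub (psupp_finite _)
      have huf : u * f₀ ∈ Sn X n₀ := hVsub hu
      simp only [Sn, Set.mem_setOf_eq] at huf
      omega
    obtain ⟨g, hg1, hg2⟩ := exists_family A hAfin (2 * n₀)
    set Z := U ∩ ⋂ i ∈ Finset.range (2 * n₀), (fun x => (g i)⁻¹ * x * (g i)) ⁻¹' U with hZ
    have hZopen : IsOpen Z := by
      refine hUopen.inter ((Finset.range (2 * n₀)).finite_toSet.isOpen_biInter fun i _ => ?_)
      exact ((hright (g i)).comp (hleft (g i)⁻¹)).isOpen_preimage _ hUopen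
    have hZ1 : (1 : ↥(FSym X)) ∈ Z := by
      refine ⟨hU1, Set.mem_biInter fun i _ => ?_⟩
      show (g i)⁻¹ * 1 * (g i) ∈ U
      simpa using hU1
    have hZsub : Z ⊆ {1} := by
      rintro u ⟨huU, huI⟩
      by_contra hne1
      simp only [Set.mem_singleton_iff] at hne1
      obtain ⟨p, hp1, hp2⟩ := hUmeet u huU hne1
      have hmeet_i : ∀ i, i < 2 * n₀ → ∃ x, x ∈ psupp (u : Equiv.Perm X) ∧
          x ∈ ((g i : Equiv.Perm X)) '' A := by
        intro i hi
        have hv : (g i)⁻¹ * u * (g i) ∈ U :=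
          Set.mem_iInter₂.mp huI i (Finset.mem_range.mpr hi)
        have hvne : (g i)⁻¹ * u * (g i) ≠ 1 := by
          intro h
          apply hne1
          have : u = (g i) * ((g i)⁻¹ * u * (g i)) * (g i)⁻¹ := by group
          rw [h] at this
          simpa using this
        obtain ⟨x, hx1, hx2⟩ := hUmeet _ hv hvne
        refine ⟨(g i : Equiv.Perm X) x, ?_, ⟨x, hx2, rfl⟩⟩
        have hx1' : (((g i)⁻¹ * u * (g i) : ↥(FSym X)) : Equiv.Perm X) x ≠ x := hx1
        intro hcon
        apply hx1'
        have hcoe2 : (((g i)⁻¹ * u * (g i) : ↥(FSym X)) : Equiv.Perm X) x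
            = ((g i : Equiv.Perm X))⁻¹ ((u : Equiv.Perm X) ((g i : Equiv.Perm X) x)) := by
          push_cast
          simp [Equiv.Perm.mul_apply]
        rw [hcoe2, hcon]
        simp
      choose q hq1 hq2 using hmeet_i
      set c : ℕ → X := fun i => if h : i < 2 * n₀ then q i h else p with hc
      have hcmem : ∀ i ∈ Finset.range (2 * n₀ + 1), c i ∈ (psupp_finite u).toFinset := by
        intro i _
        rw [Set.Finite.mem_toFinset]
        by_cases h : i < 2 * n₀
        · simp only [hc, dif_pos h]
          exact hq1 i h
        · simp only [hc, dif_neg h]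
          exact hp1
      have hcinj : Set.InjOn c ↑(Finset.range (2 * n₀ + 1)) := by
        intro i hi j hj hij
        simp only [Finset.coe_range, Set.mem_Iio] at hi hj
        by_contra hne
        by_cases h1 : i < 2 * n₀ <;> by_cases h2 : j < 2 * n₀
        · have e1 : c i ∈ ((g i : Equiv.Perm X)) '' A := by
            simp only [hc, dif_pos h1]; exact hq2 i h1
          have e2 : c j ∈ ((g j : Equiv.Perm X)) '' A := by
            simp only [hc, dif_pos h2]; exact hq2 j h2
          exact Set.disjoint_left.mp (hg2 i h1 j h2 hne) e1 (hij ▸ e2)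
        · have e1 : c i ∈ ((g i : Equiv.Perm X)) '' A := by
            simp only [hc, dif_pos h1]; exact hq2 i h1
          have e2 : c j ∈ A := by
            simp only [hc, dif_neg h2]; exact hp2
          exact Set.disjoint_left.mp (hg1 i h1) e1 (hij ▸ e2)
        · have e1 : c i ∈ A := by
            simp only [hc, dif_neg h1]; exact hp2
          have e2 : c j ∈ ((g j : Equiv.Perm X)) '' A := by
            simp only [hc, dif_pos h2]; exact hq2 j h2
          exact Set.disjoint_left.mp (hg1 j h2) e2 (hij.symm ▸ e1)
        · omega
      have hcard : 2 * n₀ + 1 ≤ (psupp (u : Equiv.Perm X)).ncard := by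
        rw [Set.ncard_eq_toFinset_card _ (psupp_finite u)]
        calc 2 * n₀ + 1 = (Finset.range (2 * n₀ + 1)).card := by simp
          _ ≤ ((psupp_finite u).toFinset).card :=
            Finset.card_le_card_of_injOn c hcmem hcinj
      have := hUcard u huU
      omega
    have heq : ({1} : Set ↥(FSym X)) = Z :=
      Set.Subset.antisymm (Set.singleton_subset_iff.mpr hZ1) hZsub
    rw [heq]
    exact hZopen
end

section
/- Let (S, supp) be a supp-perfect semigroup with support map supp : S → Set X, where X = ⋃_{a∈S} supp(a). Then S has finite double centralizers: for every finite subset T ⊆ S the double centralizer Cent(Cent(T)) = {f ∈ S : ∀ g, (∀ t ∈ T, t·g = g·t) → f·g = g·f} is finite. -/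
/-- Every supp-perfect semigroup has finite double centralizers: for every finite subset
`T ⊆ S` the double centralizer `Cent(Cent(T))` is finite. -/
theorem suppPerfect_finite_double_centralizers
    {S X : Type*} [Semigroup S] (supp : S → Set X)
    (h1 : ∀ f g : S, supp (f * g) ⊆ supp f ∪ supp g)
    (h2 : ∀ f g : S, supp f ∩ supp g = ∅ → f * g = g * f)
    (hX : (⋃ a : S, supp a) = Set.univ)
    (hfin : ∀ f : S, (supp f).Finite)
    (hSF : ∀ F : Set X, F.Finite → {f : S | supp f ⊆ F}.Finite)
    (hperf : ∀ F : Set X, F.Finite →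
      {f : S | supp f ⊆ F} = {g : S | ∀ f : S, supp f ⊆ Fᶜ → f * g = g * f})
    (T : Set S) (hT : T.Finite) :
    {f : S | ∀ g : S, (∀ t ∈ T, t * g = g * t) → f * g = g * f}.Finite := by
  set F : Set X := ⋃ t ∈ T, supp t with hF
  have hFfin : F.Finite := hT.biUnion (fun t _ => hfin t)
  apply (hSF F hFfin).subset
  intro f hf
  rw [hperf F hFfin]
  intro g hg
  refine (hf g ?_).symm
  intro t ht
  apply h2
  rw [Set.eq_empty_iff_forall_notMem]
  rintro x ⟨hxt, hxg⟩
  exact hg hxg (Set.mem_biUnion ht hxt)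
end

section
/- Let (S, supp) be a supp-perfect semigroup with support map supp : S → Set X, where X = ⋃_{a∈S} supp(a). Then S is locally finite: every finite subset F ⊆ S is contained in a finite subsemigroup T ⊆ S. -/
/-- Every supp-perfect semigroup is locally finite: every finite subset is contained in a
finite subsemigroup. -/
theorem suppPerfect_locallyFinite
    {S X : Type*} [Semigroup S] (supp : S → Set X)
    (h1 : ∀ f g : S, supp (f * g) ⊆ supp f ∪ supp g)
    (h2 : ∀ f g : S, supp f ∩ supp g = ∅ → f * g = g * f)
    (hX : (⋃ a : S, supp a) = Set.univ)
    (hfin : ∀ f : S, (supp f).Finite)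
    (hSF : ∀ F : Set X, F.Finite → {f : S | supp f ⊆ F}.Finite)
    (hperf : ∀ F : Set X, F.Finite →
      {f : S | supp f ⊆ F} = {g : S | ∀ f : S, supp f ⊆ Fᶜ → f * g = g * f})
    (F : Set S) (hF : F.Finite) :
    ∃ T : Set S, T.Finite ∧ F ⊆ T ∧ ∀ a ∈ T, ∀ b ∈ T, a * b ∈ T := by
  refine ⟨{f : S | supp f ⊆ ⋃ g ∈ F, supp g}, hSF _ (hF.biUnion fun g _ => hfin g), ?_, ?_⟩
  · exact fun f hf => Set.subset_biUnion_of_mem hf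
  · intro a ha b hb
    exact (h1 a b).trans (Set.union_subset ha hb)
end

section
/- Let S be a semigroup with semi-Zariski topology Ζ, the topology generated by the subbase consisting of the sets {x ∈ S : a·x·b ≠ c} and {x ∈ S : a·x·b ≠ c·x·d}, where a, b, c, d range over S¹ = S with an external identity adjoined. Then Ζ is coarser than (contained in) every Hausdorff shift-invariant topology on S. -/
/-- The semi-Zariski topology on a semigroup `S`: generated by the subbase of sets
`{x | a*x*b ≠ c}` and `{x | a*x*b ≠ c*x*d}` with `a, b, c, d ∈ S¹` (here `S¹ = WithOne S`
is `S` with an external identity adjoined). -/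
def semiZariski (T : Type*) [Mul T] : TopologicalSpace T :=
  TopologicalSpace.generateFrom
    ({U : Set T | ∃ a b c : WithOne T, U = {x : T | a * (x : WithOne T) * b ≠ c}} ∪
     {U : Set T | ∃ a b c d : WithOne T,
        U = {x : T | a * (x : WithOne T) * b ≠ c * (x : WithOne T) * d}})

private lemma exists_cont_shift {S : Type*} [Semigroup S] (τ : TopologicalSpace S)
    (hleft : ∀ a : S, @Continuous _ _ τ τ (fun x => a * x))
    (hright : ∀ a : S, @Continuous _ _ τ τ (fun x => x * a))
    (a b : WithOne S) :
    ∃ f : S → S, @Continuous _ _ τ τ f ∧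
      ∀ x : S, a * (x : WithOne S) * b = (f x : WithOne S) := by
  induction a using WithOne.recOneCoe with
  | one =>
    induction b using WithOne.recOneCoe with
    | one => exact ⟨id, continuous_id, fun x => by simp⟩
    | coe b => exact ⟨fun x => x * b, hright b, fun x => by simp⟩
  | coe a =>
    induction b using WithOne.recOneCoe with
    | one => exact ⟨fun x => a * x, hleft a, fun x => by simp⟩
    | coe b =>
      exact ⟨fun x => a * x * b, (hright b).comp (hleft a), fun x => by simp⟩

/-- The semi-Zariski topology on a semigroup `S` is coarser than every Hausdorff
shift-invariant topology on `S`: every semi-Zariski-open set is open. -/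
theorem semiZariski_coarser_of_hausdorff_shift_invariant
    {S : Type*} [Semigroup S] (τ : TopologicalSpace S)
    (hT2 : @T2Space S τ)
    (hleft : ∀ a : S, @Continuous _ _ τ τ (fun x => a * x))
    (hright : ∀ a : S, @Continuous _ _ τ τ (fun x => x * a)) :
    ∀ U : Set S, @IsOpen S (semiZariski S) U → @IsOpen S τ U := by
  intro U hU
  induction hU with
  | basic V hV =>
    rcases hV with ⟨a, b, c, rfl⟩ | ⟨a, b, c, d, rfl⟩
    · obtain ⟨f, hf, hfe⟩ := exists_cont_shift τ hleft hright a b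
      induction c using WithOne.recOneCoe with
      | one =>
        have : {x : S | a * (x : WithOne S) * b ≠ 1} = Set.univ := by
          ext x; simp [hfe x]
        rw [this]; exact isOpen_univ
      | coe c =>
        have : {x : S | a * (x : WithOne S) * b ≠ (c : WithOne S)} = f ⁻¹' {c}ᶜ := by
          ext x; simp [hfe x]
        rw [this]
        exact (isClosed_singleton.preimage hf).isOpen_compl
    · obtain ⟨f, hf, hfe⟩ := exists_cont_shift τ hleft hright a b
      obtain ⟨g, hg, hge⟩ := exists_cont_shift τ hleft hright c d
      have : {x : S | a * (x : WithOne S) * b ≠ c * (x : WithOne S) * d}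
          = {x : S | f x = g x}ᶜ := by
        ext x; simp [hfe x, hge x]
      rw [this]
      exact (isClosed_eq hf hg).isOpen_compl
  | univ => exact isOpen_univ
  | inter _ _ _ _ h1 h2 => exact h1.inter h2
  | sUnion _ _ ih => exact isOpen_sUnion ih
end

section
/- Let (S, supp) be a supp-perfect semigroup with support map supp : S → Set X, where X = ⋃_{a∈S} supp(a). Let f ∈ S, x ∈ supp(f), and let F ⊆ X∖{x} be a finite subset. Then either there exists g ∈ S with supp(g) ⊆ {x} and f·g ≠ g·f, or there exists an infinite set 𝔽 ⊆ {g ∈ S : supp(g) ⊆ X∖F and f·g ≠ g·f} such that for any two distinct elements g, h ∈ 𝔽 one has supp(g) ∩ supp(h) ⊆ {x} and supp(g) ≠ {x} and supp(g) ⊄ {x} (i.e., supp(g)∖{x} ≠ ∅). -/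
/-- In a supp-perfect semigroup, for `f ∈ S`, `x ∈ supp f` and a finite `F ⊆ X∖{x}`, either
some `g` with `supp g ⊆ {x}` fails to commute with `f`, or there is an infinite family
`𝓕` of elements `g` with `supp g ⊆ X∖F` not commuting with `f`, whose supports pairwise
meet only in `x`, with `supp g ≠ {x}` and `supp g ⊄ {x}`. -/
theorem suppPerfect_lemma_one
    {S X : Type*} [Semigroup S] (supp : S → Set X)
    (h1 : ∀ f g : S, supp (f * g) ⊆ supp f ∪ supp g)
    (h2 : ∀ f g : S, supp f ∩ supp g = ∅ → f * g = g * f)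
    (hX : (⋃ a : S, supp a) = Set.univ)
    (hfin : ∀ f : S, (supp f).Finite)
    (hSF : ∀ F : Set X, F.Finite → {f : S | supp f ⊆ F}.Finite)
    (hperf : ∀ F : Set X, F.Finite →
      {f : S | supp f ⊆ F} = {g : S | ∀ f : S, supp f ⊆ Fᶜ → f * g = g * f})
    (f : S) (x : X) (hx : x ∈ supp f)
    (F : Set X) (hFfin : F.Finite) (hxF : x ∉ F) :
    (∃ g : S, supp g ⊆ {x} ∧ f * g ≠ g * f) ∨
    (∃ 𝓕 : Set S, 𝓕.Infinite ∧
      (∀ g ∈ 𝓕, supp g ⊆ Fᶜ ∧ f * g ≠ g * f) ∧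
      (∀ g ∈ 𝓕, ∀ h ∈ 𝓕, g ≠ h →
        supp g ∩ supp h ⊆ {x} ∧ supp g ≠ {x} ∧ ¬ supp g ⊆ {x})) := by
  classical
  by_cases hgx : ∃ g : S, supp g ⊆ {x} ∧ f * g ≠ g * f
  · exact Or.inl hgx
  · right
    push_neg at hgx
    -- key step: for any finite G avoiding x, there is a noncommuting element
    -- with support away from G and not contained in {x}
    have key : ∀ G : Set X, G.Finite → x ∉ G →
        ∃ g : S, supp g ⊆ Gᶜ ∧ f * g ≠ g * f ∧ ¬ supp g ⊆ {x} := by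
      intro G hGfin hxG
      by_contra hcon
      push_neg at hcon
      have hf : f ∈ {g : S | ∀ f' : S, supp f' ⊆ Gᶜ → f' * g = g * f'} := by
        intro g hg
        by_contra hne
        have hne' : f * g ≠ g * f := fun e => hne e.symm
        exact hne (hgx g (hcon g hg hne')).symm
      have hfG : f ∈ {f' : S | supp f' ⊆ G} := by
        rw [hperf G hGfin]; exact hf
      exact hxG (hfG hx)
    choose pick hp1 hp2 hp3 using
      fun p : {G : Set X // G.Finite ∧ x ∉ G ∧ F ⊆ G} => key p.1 p.2.1 p.2.2.1
    set stepT : {G : Set X // G.Finite ∧ x ∉ G ∧ F ⊆ G} →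
        {G : Set X // G.Finite ∧ x ∉ G ∧ F ⊆ G} :=
      fun p => ⟨p.1 ∪ (supp (pick p) \ {x}),
        p.2.1.union ((hfin _).subset Set.diff_subset),
        by
          intro hmem
          rcases hmem with h | h
          · exact p.2.2.1 h
          · exact h.2 rfl,
        p.2.2.2.trans Set.subset_union_left⟩ with hstepT
    set Gs : ℕ → {G : Set X // G.Finite ∧ x ∉ G ∧ F ⊆ G} :=
      fun n => Nat.rec ⟨F, hFfin, hxF, subset_rfl⟩ (fun _ p => stepT p) n with hGs
    set g : ℕ → S := fun n => pick (Gs n) with hg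
    have hGsucc : ∀ n, (Gs (n + 1)).1 = (Gs n).1 ∪ (supp (g n) \ {x}) := fun n => rfl
    have hmono : ∀ m n, m ≤ n → (Gs m).1 ⊆ (Gs n).1 := by
      intro m n hmn
      induction hmn with
      | refl => exact subset_rfl
      | step h ih =>
          refine ih.trans ?_
          rw [hGsucc]
          exact Set.subset_union_left
    have hsupp : ∀ n, supp (g n) ⊆ ((Gs n).1)ᶜ := fun n => hp1 _
    have hF : ∀ n, supp (g n) ⊆ Fᶜ :=
      fun n => (hsupp n).trans (Set.compl_subset_compl.2 (Gs n).2.2.2)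
    have hstep : ∀ m n, m < n → supp (g m) \ {x} ⊆ (Gs n).1 := by
      intro m n h
      refine Set.Subset.trans ?_ (hmono (m + 1) n h)
      rw [hGsucc]
      exact Set.subset_union_right
    have hdisj : ∀ m n, m < n → supp (g m) ∩ supp (g n) ⊆ {x} := by
      intro m n h p hp
      by_contra hpx
      exact hsupp n hp.2 (hstep m n h ⟨hp.1, hpx⟩)
    have hne : ∀ m n, m < n → g m ≠ g n := by
      intro m n h e
      obtain ⟨p, hp, hpx⟩ := Set.not_subset.1 (hp3 (Gs m))
      have h1 : p ∈ (Gs n).1 := hstep m n h ⟨hp, hpx⟩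
      have h2 : p ∈ supp (g n) := e ▸ hp
      exact hsupp n h2 h1
    have ginj : Function.Injective g := by
      intro a b e
      by_contra hab
      rcases lt_trichotomy a b with h | h | h
      · exact hne a b h e
      · exact hab h
      · exact hne b a h e.symm
    refine ⟨Set.range g, Set.infinite_range_of_injective ginj, ?_, ?_⟩
    · rintro g' ⟨n, rfl⟩
      exact ⟨hF n, hp2 _⟩
    · rintro g1 ⟨m, rfl⟩ g2 ⟨n, rfl⟩ hne'
      have hmn : m ≠ n := fun e => hne' (by rw [e])
      refine ⟨?_, fun e => hp3 (Gs m) e.subset, hp3 _⟩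
      rcases hmn.lt_or_gt with h | h
      · exact hdisj m n h
      · intro p hp
        exact hdisj n m h ⟨hp.2, hp.1⟩
end

section
/- Let (S, supp) be a supp-perfect semigroup with support map supp : S → Set X, where X = ⋃_{a∈S} supp(a), and endow S with the semi-Zariski topology Ζ. Then for every n ∈ ℕ and every f ∈ S there is a Ζ-open neighborhood O of f such that every g ∈ O with |supp(g)| ≤ n satisfies supp(f) ⊆ supp(g). -/
/-- In a supp-perfect semigroup with the semi-Zariski topology, every `f` has an open
neighborhood `O` such that every `g ∈ O` with `|supp g| ≤ n` satisfies `supp f ⊆ supp g`. -/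
theorem suppPerfect_lemma_two
    {S X : Type*} [Semigroup S] (supp : S → Set X)
    (h1 : ∀ f g : S, supp (f * g) ⊆ supp f ∪ supp g)
    (h2 : ∀ f g : S, supp f ∩ supp g = ∅ → f * g = g * f)
    (hX : (⋃ a : S, supp a) = Set.univ)
    (hfin : ∀ f : S, (supp f).Finite)
    (hSF : ∀ F : Set X, F.Finite → {f : S | supp f ⊆ F}.Finite)
    (hperf : ∀ F : Set X, F.Finite →
      {f : S | supp f ⊆ F} = {g : S | ∀ f : S, supp f ⊆ Fᶜ → f * g = g * f})
    (n : ℕ) (f : S) :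
    ∃ O : Set S, @IsOpen S (semiZariski S) O ∧ f ∈ O ∧
      ∀ g ∈ O, (supp g).encard ≤ (n : ℕ∞) → supp f ⊆ supp g := by
  classical
  have lemA : ∀ F : Set X, F.Finite → ¬ supp f ⊆ F →
      ∃ h : S, supp h ⊆ Fᶜ ∧ h * f ≠ f * h := by
    intro F hF hnsub
    have hf' : f ∉ {g : S | supp g ⊆ F} := hnsub
    rw [hperf F hF] at hf'
    simp only [Set.mem_setOf_eq, not_forall] at hf'
    obtain ⟨h, hh, hne⟩ := hf'
    exact ⟨h, hh, hne⟩
  have key : ∀ x : X, x ∈ supp f → ∀ m : ℕ, ∃ h : Fin m → S,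
      (∀ i, h i * f ≠ f * h i) ∧
      (∀ i j, i ≠ j → supp (h i) ∩ supp (h j) ⊆ {x}) := by
    intro x hx m
    induction m with
    | zero => exact ⟨Fin.elim0, fun i => i.elim0, fun i => i.elim0⟩
    | succ m ih =>
      obtain ⟨h, hc, hd⟩ := ih
      set F : Set X := (supp f ∪ ⋃ i, supp (h i)) \ {x} with hF
      have hFfin : F.Finite :=
        (((hfin f).union (Set.finite_iUnion fun i => hfin (h i))).diff)
      have hns : ¬ supp f ⊆ F := fun hsub => (hsub hx).2 rfl
      obtain ⟨h', hh', hne⟩ := lemA F hFfin hns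
      have hdisj : ∀ i, supp h' ∩ supp (h i) ⊆ {x} := by
        intro i y ⟨hy1, hy2⟩
        by_contra hyx
        exact (hh' hy1) ⟨Or.inr (Set.mem_iUnion.mpr ⟨i, hy2⟩), hyx⟩
      refine ⟨Fin.snoc h h', ?_, ?_⟩
      · intro i
        refine Fin.lastCases ?_ ?_ i
        · simpa using hne
        · intro j; simpa using hc j
      · intro i j hij
        induction i using Fin.lastCases with
        | last =>
          induction j using Fin.lastCases with
          | last => exact absurd rfl hij
          | cast j' =>
            simp only [Fin.snoc_last, Fin.snoc_castSucc]
            exact hdisj j'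
        | cast i' =>
          induction j using Fin.lastCases with
          | last =>
            simp only [Fin.snoc_last, Fin.snoc_castSucc]
            rw [Set.inter_comm]
            exact hdisj i'
          | cast j' =>
            simp only [Fin.snoc_castSucc]
            exact hd i' j' fun e => hij (congrArg Fin.castSucc e)
  have key' : ∀ x : X, ∃ h : Fin (n+1) → S, x ∈ supp f →
      (∀ i, h i * f ≠ f * h i) ∧
      (∀ i j, i ≠ j → supp (h i) ∩ supp (h j) ⊆ {x}) := by
    intro x
    by_cases hx : x ∈ supp f
    · obtain ⟨h, hc, hd⟩ := key x hx (n+1)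
      exact ⟨h, fun _ => ⟨hc, hd⟩⟩
    · exact ⟨fun _ => f, fun hx' => absurd hx' hx⟩
  choose H hH using key'
  refine ⟨{y : S | ∀ x ∈ supp f, ∀ i : Fin (n+1), H x i * y ≠ y * H x i}, ?_, ?_, ?_⟩
  · letI := semiZariski S
    have heq : {y : S | ∀ x ∈ supp f, ∀ i : Fin (n+1), H x i * y ≠ y * H x i}
        = ⋂ x ∈ (hfin f).toFinset, ⋂ i : Fin (n+1),
            {y : S | (↑(H x i) : WithOne S) * (↑y) * 1 ≠ 1 * (↑y) * ↑(H x i)} := by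
      ext y
      simp only [Set.mem_setOf_eq, Set.mem_iInter, Set.Finite.mem_toFinset, mul_one, one_mul,
        ← WithOne.coe_mul, ne_eq, WithOne.coe_inj]
    rw [heq]
    refine isOpen_biInter_finset fun x _ => isOpen_iInter_of_finite fun i => ?_
    exact TopologicalSpace.GenerateOpen.basic _
      (Or.inr ⟨↑(H x i), 1, 1, ↑(H x i), rfl⟩)
  · intro x hx i
    exact (hH x hx).1 i
  · intro g hg hcard
    by_contra hns
    rw [Set.not_subset] at hns
    obtain ⟨x, hxf, hxg⟩ := hns
    obtain ⟨hc, hd⟩ := hH x hxf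
    have hdis : ∃ i : Fin (n+1), supp (H x i) ∩ supp g = ∅ := by
      by_contra hno
      push_neg at hno
      choose y hy using hno
      have hyinj : Function.Injective y := by
        intro i j hij
        by_contra hij'
        have : y i ∈ ({x} : Set X) := hd i j hij' ⟨(hy i).1, hij ▸ (hy j).1⟩
        exact hxg (this ▸ (hy i).2)
      have hsub : Set.range y ⊆ supp g := by
        rintro _ ⟨i, rfl⟩; exact (hy i).2
      have h1' : (Set.range y).encard = ((n+1 : ℕ) : ℕ∞) := by
        rw [← Set.image_univ, hyinj.encard_image, Set.encard_univ]
        simp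
      have hle : ((n+1 : ℕ) : ℕ∞) ≤ (n : ℕ∞) :=
        h1' ▸ (Set.encard_mono hsub).trans hcard
      have : n + 1 ≤ n := by exact_mod_cast hle
      omega
    obtain ⟨i, hi⟩ := hdis
    exact hg x hxf i (h2 _ _ hi)
end

section
/- Let (S, supp) be a supp-perfect semigroup with support map supp : S → Set X, where X = ⋃_{a∈S} supp(a), and endow S with the semi-Zariski topology Ζ. Then for every n ∈ ℕ the set S_{≤n} = {f ∈ S : |supp(f)| ≤ n} is closed in (S, Ζ). -/
/-- In a supp-perfect semigroup with the semi-Zariski topology, the set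
`S_{≤n} = {f : |supp f| ≤ n}` is closed. -/
theorem suppPerfect_le_n_closed
    {S X : Type*} [Semigroup S] (supp : S → Set X)
    (h1 : ∀ f g : S, supp (f * g) ⊆ supp f ∪ supp g)
    (h2 : ∀ f g : S, supp f ∩ supp g = ∅ → f * g = g * f)
    (hX : (⋃ a : S, supp a) = Set.univ)
    (hfin : ∀ f : S, (supp f).Finite)
    (hSF : ∀ F : Set X, F.Finite → {f : S | supp f ⊆ F}.Finite)
    (hperf : ∀ F : Set X, F.Finite →
      {f : S | supp f ⊆ F} = {g : S | ∀ f : S, supp f ⊆ Fᶜ → f * g = g * f})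
    (n : ℕ) :
    @IsClosed S (semiZariski S) {f : S | (supp f).encard ≤ (n : ℕ∞)} := by
  classical
  letI : TopologicalSpace S := semiZariski S
  -- commutation sets are closed
  have hcom : ∀ t : S, IsClosed {x : S | t * x = x * t} := by
    intro t
    rw [← isOpen_compl_iff]
    apply TopologicalSpace.isOpen_generateFrom_of_mem
    refine Or.inr ⟨(t : WithOne S), 1, 1, (t : WithOne S), ?_⟩
    ext x
    simp [← WithOne.coe_mul, WithOne.coe_inj]
  -- main set-theoretic identity
  have key : {f : S | (supp f).encard ≤ (n : ℕ∞)} =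
      ⋂ (t : Fin (n+1) → S) (_ : ∀ i j : Fin (n+1), i ≠ j →
        supp (t i) ∩ supp (t j) = ∅), ⋃ i, {x : S | t i * x = x * t i} := by
    apply Set.Subset.antisymm
    · intro x hx
      simp only [Set.mem_iInter, Set.mem_iUnion, Set.mem_setOf_eq]
      intro t ht
      by_contra hcon
      push_neg at hcon
      have hq : ∀ i : Fin (n+1), ∃ q, q ∈ supp (t i) ∩ supp x := by
        intro i
        by_contra h
        push_neg at h
        exact hcon i (h2 (t i) x (Set.eq_empty_iff_forall_notMem.2 h))
      choose q hq using hq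
      have hinj : Function.Injective q := by
        intro i j hij
        by_contra hne
        have hmem : q i ∈ supp (t i) ∩ supp (t j) := ⟨(hq i).1, hij ▸ (hq j).1⟩
        rw [ht i j hne] at hmem
        exact hmem
      have hsub : Set.range q ⊆ supp x := by
        rintro _ ⟨i, rfl⟩; exact (hq i).2
      have hcard : (Set.range q).encard = ((n+1 : ℕ) : ℕ∞) := by
        rw [← Set.image_univ, Set.InjOn.encard_image hinj.injOn,
          Set.encard_univ, ENat.card_eq_coe_fintype_card, Fintype.card_fin]
      have hle := Set.encard_le_encard hsub
      rw [hcard] at hle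
      have : ((n+1 : ℕ) : ℕ∞) ≤ ((n : ℕ) : ℕ∞) := le_trans hle hx
      exact absurd (Nat.cast_le.mp this) (by omega)
    · intro x hx
      simp only [Set.mem_iInter, Set.mem_iUnion, Set.mem_setOf_eq] at hx
      by_contra hcon
      simp only [Set.mem_setOf_eq, not_le] at hcon
      have hle : ((n+1 : ℕ) : ℕ∞) ≤ (supp x).encard := by
        have := (ENat.add_one_le_iff (ENat.coe_ne_top n)).2 hcon
        exact_mod_cast this
      obtain ⟨P, hPsub, hPcard⟩ := Set.exists_subset_encard_eq hle
      have hPfin : P.Finite := Set.finite_of_encard_eq_coe hPcard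
      have hFcard : hPfin.toFinset.card = n + 1 := by
        have := hPfin.encard_eq_coe_toFinset_card
        rw [hPcard] at this
        exact_mod_cast this.symm
      -- an injective choice of n+1 points of supp x
      set p : Fin (n+1) → X :=
        fun i => (hPfin.toFinset.equivFin.symm (Fin.cast hFcard.symm i) : X) with hp_def
      have hpinj : Function.Injective p := by
        intro i j hij
        have := Subtype.val_injective hij
        have := hPfin.toFinset.equivFin.symm.injective this
        exact Fin.cast_injective _ this
      have hp : ∀ i, p i ∈ supp x := by
        intro i
        apply hPsub
        have := (hPfin.toFinset.equivFin.symm (Fin.cast hFcard.symm i)).2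
        exact hPfin.mem_toFinset.mp this
      -- recursive construction of witnesses
      have hrec : ∀ k : ℕ, ∀ hk : k ≤ n+1, ∃ t : Fin k → S,
          (∀ i j : Fin k, i ≠ j → supp (t i) ∩ supp (t j) = ∅) ∧
          (∀ i : Fin k, t i * x ≠ x * t i) ∧
          (∀ i : Fin k, supp (t i) ∩ supp x ⊆ {p ⟨i.1, lt_of_lt_of_le i.2 hk⟩}) := by
        intro k
        induction k with
        | zero => exact fun _ => ⟨Fin.elim0, fun i => i.elim0, fun i => i.elim0,
            fun i => i.elim0⟩
        | succ k ih =>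
          intro hk
          obtain ⟨t, ht1, ht2, ht3⟩ := ih (Nat.le_of_succ_le hk)
          have hk' : k < n + 1 := hk
          set pk := p ⟨k, hk'⟩ with hpk_def
          set G : Set X := (supp x \ {pk}) ∪ ⋃ i : Fin k, supp (t i) with hG
          have hGfin : G.Finite :=
            ((hfin x).diff).union (Set.finite_iUnion fun i => hfin _)
          have hpkG : pk ∉ G := by
            rintro (h | h)
            · exact h.2 rfl
            · obtain ⟨i, hi⟩ := Set.mem_iUnion.mp h
              have hmem := ht3 i ⟨hi, hp ⟨k, hk'⟩⟩
              have heq : (⟨k, hk'⟩ : Fin (n+1)) =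
                  ⟨i.1, lt_of_lt_of_le i.2 (Nat.le_of_succ_le hk)⟩ := hpinj hmem
              have : k = i.1 := congrArg Fin.val heq
              omega
          have hxG : x ∉ {f : S | supp f ⊆ G} := fun h => hpkG (h (hp ⟨k, hk'⟩))
          rw [hperf G hGfin] at hxG
          simp only [Set.mem_setOf_eq] at hxG
          push_neg at hxG
          obtain ⟨f, hf1, hf2⟩ := hxG
          have hfdisj : ∀ i : Fin k, supp (t i) ∩ supp f = ∅ := by
            intro i
            apply Set.eq_empty_iff_forall_notMem.2
            rintro q ⟨hq1, hq2⟩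
            exact (hf1 hq2) (Or.inr (Set.mem_iUnion.mpr ⟨i, hq1⟩))
          refine ⟨fun i => if h : i.1 < k then t ⟨i.1, h⟩ else f, ?_, ?_, ?_⟩
          · intro i j hij
            by_cases hi : i.1 < k <;> by_cases hj : j.1 < k <;>
              simp only [dif_pos, dif_neg, hi, hj, dite_true, dite_false]
            · apply ht1
              intro hcontra
              have hval : i.1 = j.1 := by simpa using hcontra
              exact hij (Fin.ext hval)
            · exact hfdisj ⟨i.1, hi⟩
            · rw [Set.inter_comm]; exact hfdisj ⟨j.1, hj⟩
            · exact absurd (Fin.ext (by omega : i.1 = j.1)) hij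
          · intro i
            by_cases hi : i.1 < k <;>
              simp only [dif_pos, dif_neg, hi, dite_true, dite_false]
            · exact ht2 ⟨i.1, hi⟩
            · exact hf2
          · intro i
            by_cases hi : i.1 < k <;>
              simp only [dif_pos, dif_neg, hi, dite_true, dite_false]
            · exact ht3 ⟨i.1, hi⟩
            · have hik : i.1 = k := by omega
              rintro q ⟨hq1, hq2⟩
              have hqG : q ∉ G := hf1 hq1
              have : q = pk := by
                by_contra hne
                exact hqG (Or.inl ⟨hq2, hne⟩)
              rw [this, hpk_def]
              have : (⟨i.1, lt_of_lt_of_le i.2 hk⟩ : Fin (n+1)) = ⟨k, hk'⟩ :=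
                Fin.ext hik
              rw [this]
              rfl
      obtain ⟨t, ht1, ht2, _⟩ := hrec (n+1) le_rfl
      obtain ⟨i, hi⟩ := hx t ht1
      exact ht2 i hi
  rw [key]
  exact isClosed_iInter fun t => isClosed_iInter fun _ =>
    isClosed_iUnion_of_finite fun i => hcom (t i)
end

section
/- Let (S, supp) be a supp-perfect semigroup with support map supp : S → Set X, where X = ⋃_{a∈S} supp(a), and endow S with the semi-Zariski topology Ζ. Then for every n ∈ ℕ and every x ∈ X, the set {f ∈ S : |supp(f)| ≤ n and x ∈ supp(f)} is open in the subspace S_{≤n} = {f ∈ S : |supp(f)| ≤ n} of (S, Ζ). -/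
lemma exists_witness_family
    {S X : Type*} [Semigroup S] (supp : S → Set X)
    (hfin : ∀ f : S, (supp f).Finite)
    (hperf : ∀ F : Set X, F.Finite →
      {f : S | supp f ⊆ F} = {g : S | ∀ f : S, supp f ⊆ Fᶜ → f * g = g * f})
    (f : S) (x : X) (hx : x ∈ supp f) (k : ℕ) :
    ∃ h : Fin k → S, (∀ i, f * h i ≠ h i * f) ∧
      ∀ i j, i ≠ j → supp (h i) ∩ supp (h j) ⊆ {x} := by
  induction k with
  | zero => exact ⟨Fin.elim0, fun i => i.elim0, fun i => i.elim0⟩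
  | succ k ih =>
    obtain ⟨h, hne, hdisj⟩ := ih
    set F : Set X := ⋃ i, (supp (h i) \ {x}) with hF
    have hFfin : F.Finite := Set.finite_iUnion fun i => (hfin _).diff
    have hxF : x ∉ F := by simp [hF]
    have hfnot : f ∉ {f : S | supp f ⊆ F} := fun hsub => hxF (hsub hx)
    rw [hperf F hFfin] at hfnot
    simp only [Set.mem_setOf_eq, not_forall] at hfnot
    obtain ⟨g, hgsub, hgne⟩ := hfnot
    have key : ∀ i : Fin k, supp g ∩ supp (h i) ⊆ {x} := by
      intro i y hy
      by_contra hyx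
      exact hgsub hy.1 (Set.mem_iUnion.2 ⟨i, hy.2, hyx⟩)
    refine ⟨Fin.snoc h g, ?_, ?_⟩
    · intro i
      induction i using Fin.lastCases with
      | last => simpa [Fin.snoc_last] using fun e => hgne e.symm
      | cast i' => simpa [Fin.snoc_castSucc] using hne i'
    · intro i j hij
      induction i using Fin.lastCases with
      | last =>
        induction j using Fin.lastCases with
        | last => exact absurd rfl hij
        | cast j' =>
          simp only [Fin.snoc_last, Fin.snoc_castSucc]
          exact key j'
      | cast i' =>
        induction j using Fin.lastCases with
        | last =>
          simp only [Fin.snoc_last, Fin.snoc_castSucc]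
          rw [Set.inter_comm]
          exact key i'
        | cast j' =>
          simp only [Fin.snoc_castSucc]
          exact hdisj i' j' (fun e => hij (by rw [e]))


/-- In a supp-perfect semigroup with the semi-Zariski topology, for every `x ∈ X` the set
`{f ∈ S_{≤n} : x ∈ supp f}` is open in the subspace `S_{≤n} = {f : |supp f| ≤ n}`. -/
theorem suppPerfect_mem_supp_open_in_le_n
    {S X : Type*} [Semigroup S] (supp : S → Set X)
    (h1 : ∀ f g : S, supp (f * g) ⊆ supp f ∪ supp g)
    (h2 : ∀ f g : S, supp f ∩ supp g = ∅ → f * g = g * f)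
    (hX : (⋃ a : S, supp a) = Set.univ)
    (hfin : ∀ f : S, (supp f).Finite)
    (hSF : ∀ F : Set X, F.Finite → {f : S | supp f ⊆ F}.Finite)
    (hperf : ∀ F : Set X, F.Finite →
      {f : S | supp f ⊆ F} = {g : S | ∀ f : S, supp f ⊆ Fᶜ → f * g = g * f})
    (n : ℕ) (x : X) :
    @IsOpen {f : S | (supp f).encard ≤ (n : ℕ∞)}
      (TopologicalSpace.induced Subtype.val (semiZariski S))
      {g : {f : S | (supp f).encard ≤ (n : ℕ∞)} | x ∈ supp g.1} := by
  letI : TopologicalSpace S := semiZariski S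
  letI : TopologicalSpace {f : S | (supp f).encard ≤ (n : ℕ∞)} :=
    TopologicalSpace.induced Subtype.val (semiZariski S)
  rw [isOpen_iff_forall_mem_open]
  rintro f hf
  obtain ⟨h, hne, hdisj⟩ := exists_witness_family supp hfin hperf f.1 x hf (n+1)
  set V : Set S := ⋂ i : Fin (n+1), {g : S | g * h i ≠ h i * g} with hV
  have hVopen : IsOpen V := by
    apply isOpen_iInter_of_finite
    intro i
    apply TopologicalSpace.GenerateOpen.basic
    right
    refine ⟨1, (h i : WithOne S), (h i : WithOne S), 1, ?_⟩
    ext g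
    simp [← WithOne.coe_mul, WithOne.coe_inj]
  refine ⟨Subtype.val ⁻¹' V, ?_, ⟨V, hVopen, rfl⟩, ?_⟩
  · rintro ⟨g, hg⟩ hgV
    simp only [Set.mem_setOf_eq]
    by_contra hxg
    have hmem : ∀ i : Fin (n+1), (supp g ∩ supp (h i)).Nonempty := by
      intro i
      rw [Set.nonempty_iff_ne_empty]
      intro hemp
      exact (Set.mem_iInter.1 hgV i) (h2 g (h i) hemp)
    choose y hy using hmem
    have hyinj : Function.Injective y := by
      intro i j hij
      by_contra hne'
      have : y i ∈ ({x} : Set X) := hdisj i j hne' ⟨(hy i).2, hij ▸ (hy j).2⟩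
      exact hxg (this ▸ (hy i).1)
    have hrange : Set.range y ⊆ supp g := by
      rintro _ ⟨i, rfl⟩; exact (hy i).1
    have hcard : ((n : ℕ∞) + 1) ≤ (supp g).encard := by
      have := Set.encard_le_encard hrange  -- wrong name? check
      rw [← Set.image_univ, hyinj.encard_image, Set.encard_univ] at this
      simpa using this
    have h' : ((n+1 : ℕ) : ℕ∞) ≤ ((n : ℕ) : ℕ∞) := by
      exact_mod_cast le_trans hcard hg
    exact absurd (Nat.cast_le.mp h') (by omega)
  · exact Set.mem_iInter.2 fun i => hne i
end

section
/- Let (S, supp) be a supp-perfect semigroup with support map supp : S → Set X, where X = ⋃_{a∈S} supp(a), and endow S with the semi-Zariski topology Ζ. Then for every n ∈ ℕ the set S_{=n} = {f ∈ S : |supp(f)| = n} is discrete in its subspace topology inherited from (S, Ζ). -/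
/-- Auxiliary: a list that is `Pairwise R` and whose members all fail `R a a` has no
duplicates. -/
lemma nodup_of_pairwise_of_irrefl_mem {α : Type*} {l : List α} {R : α → α → Prop}
    (h : l.Pairwise R) (hm : ∀ a ∈ l, ¬ R a a) : l.Nodup := by
  induction l with
  | nil => exact List.nodup_nil
  | cons b t ih =>
    rcases List.pairwise_cons.mp h with ⟨hb, ht⟩
    refine List.nodup_cons.mpr ⟨fun hbt => ?_, ih ht (fun a ha => hm a (List.mem_cons_of_mem _ ha))⟩
    exact hm b List.mem_cons_self (hb b hbt)

section Witness

variable {S X : Type*} [Semigroup S] (supp : S → Set X)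

/-- Single witness: if `p ∈ supp f` and `A` is a finite set disjoint from `supp f`, then there
is `h` whose support avoids `(supp f \ {p}) ∪ A` and which does not commute with `f`. -/
lemma exists_suppWitness
    (hfin : ∀ f : S, (supp f).Finite)
    (hperf : ∀ F : Set X, F.Finite →
      {f : S | supp f ⊆ F} = {g : S | ∀ f : S, supp f ⊆ Fᶜ → f * g = g * f})
    (f : S) (p : X) (hp : p ∈ supp f) (A : Set X) (hA : A.Finite) (hAF : A ∩ supp f = ∅) :
    ∃ h : S, supp h ∩ ((supp f \ {p}) ∪ A) = ∅ ∧ h * f ≠ f * h := by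
  set G : Set X := (supp f \ {p}) ∪ A with hG
  have hGfin : G.Finite := (((hfin f).diff (t := {p})).union hA)
  have hfG : f ∉ {g : S | supp g ⊆ G} := by
    intro hsub
    rcases hsub hp with h | h
    · exact h.2 rfl
    · rw [Set.eq_empty_iff_forall_notMem] at hAF
      exact hAF p ⟨h, hp⟩
  rw [hperf G hGfin] at hfG
  simp only [Set.mem_setOf_eq, not_forall] at hfG
  obtain ⟨h, hh1, hh2⟩ := hfG
  refine ⟨h, ?_, hh2⟩
  rw [Set.eq_empty_iff_forall_notMem]
  rintro q ⟨hq1, hq2⟩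
  exact hh1 hq1 hq2

/-- Lists of witnesses for a fixed point `p ∈ supp f`, of any length, with pairwise disjoint
supports outside `supp f`. -/
lemma exists_suppWitness_list
    (hfin : ∀ f : S, (supp f).Finite)
    (hperf : ∀ F : Set X, F.Finite →
      {f : S | supp f ⊆ F} = {g : S | ∀ f : S, supp f ⊆ Fᶜ → f * g = g * f})
    (f : S) (p : X) (hp : p ∈ supp f) (m : ℕ) :
    ∃ Hs : List S, Hs.length = m ∧
      (∀ h ∈ Hs, supp h ∩ (supp f \ {p}) = ∅ ∧ h * f ≠ f * h) ∧
      Hs.Pairwise (fun a b => (supp a \ supp f) ∩ (supp b \ supp f) = ∅) := by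
  induction m with
  | zero => exact ⟨[], rfl, by simp, List.Pairwise.nil⟩
  | succ m ih =>
    obtain ⟨Hs, hlen, hmem, hpw⟩ := ih
    set A : Set X := ⋃ h ∈ Hs, (supp h \ supp f) with hAdef
    have hAfin : A.Finite := Set.Finite.biUnion (Hs.finite_toSet) (fun h _ => (hfin h).diff)
    have hAF : A ∩ supp f = ∅ := by
      rw [Set.eq_empty_iff_forall_notMem]
      rintro q ⟨hq1, hq2⟩
      simp only [hAdef, Set.mem_iUnion, Set.mem_diff] at hq1
      obtain ⟨h, _, _, hq⟩ := hq1
      exact hq hq2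
    obtain ⟨h₀, hh1, hh2⟩ := exists_suppWitness supp hfin hperf f p hp A hAfin hAF
    have hh1' : ∀ q ∈ supp h₀, q ∉ (supp f \ {p}) ∪ A := by
      intro q hq hq'
      rw [Set.eq_empty_iff_forall_notMem] at hh1
      exact hh1 q ⟨hq, hq'⟩
    refine ⟨h₀ :: Hs, by simp [hlen], ?_, ?_⟩
    · intro h hh'
      rcases List.mem_cons.mp hh' with rfl | hh
      · constructor
        · rw [Set.eq_empty_iff_forall_notMem]
          rintro q ⟨hq1, hq2⟩
          exact hh1' q hq1 (Or.inl hq2)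
        · exact hh2
      · exact hmem h hh
    · refine List.pairwise_cons.mpr ⟨?_, hpw⟩
      intro b hb
      rw [Set.eq_empty_iff_forall_notMem]
      rintro q ⟨⟨hq1, _⟩, hq2⟩
      refine hh1' q hq1 (Or.inr ?_)
      simp only [hAdef, Set.mem_iUnion]
      exact ⟨b, hb, hq2⟩

end Witness

/-- In a supp-perfect semigroup with the semi-Zariski topology, the set
`S_{=n} = {f : |supp f| = n}` is discrete in its subspace topology. -/
theorem suppPerfect_eq_n_discrete
    {S X : Type*} [Semigroup S] (supp : S → Set X)
    (h1 : ∀ f g : S, supp (f * g) ⊆ supp f ∪ supp g)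
    (h2 : ∀ f g : S, supp f ∩ supp g = ∅ → f * g = g * f)
    (hX : (⋃ a : S, supp a) = Set.univ)
    (hfin : ∀ f : S, (supp f).Finite)
    (hSF : ∀ F : Set X, F.Finite → {f : S | supp f ⊆ F}.Finite)
    (hperf : ∀ F : Set X, F.Finite →
      {f : S | supp f ⊆ F} = {g : S | ∀ f : S, supp f ⊆ Fᶜ → f * g = g * f})
    (n : ℕ) :
    @DiscreteTopology {f : S | (supp f).encard = (n : ℕ∞)}
      (TopologicalSpace.induced Subtype.val (semiZariski S)) := by
  classical
  letI tS : TopologicalSpace S := semiZariski S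
  -- subbasic open sets
  have open_ne : ∀ g : S, IsOpen {x : S | x ≠ g} := by
    intro g
    have hmem : {x : S | x ≠ g} ∈
        ({U : Set S | ∃ a b c : WithOne S, U = {x : S | a * (x : WithOne S) * b ≠ c}} ∪
         {U : Set S | ∃ a b c d : WithOne S,
            U = {x : S | a * (x : WithOne S) * b ≠ c * (x : WithOne S) * d}}) := by
      left
      refine ⟨1, 1, (g : WithOne S), ?_⟩
      ext x
      simp [WithOne.coe_inj]
    exact TopologicalSpace.GenerateOpen.basic _ hmem
  have open_comm : ∀ h : S, IsOpen {x : S | h * x ≠ x * h} := by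
    intro h
    have hmem : {x : S | h * x ≠ x * h} ∈
        ({U : Set S | ∃ a b c : WithOne S, U = {x : S | a * (x : WithOne S) * b ≠ c}} ∪
         {U : Set S | ∃ a b c d : WithOne S,
            U = {x : S | a * (x : WithOne S) * b ≠ c * (x : WithOne S) * d}}) := by
      right
      refine ⟨(h : WithOne S), 1, 1, (h : WithOne S), ?_⟩
      ext x
      simp only [Set.mem_setOf_eq, mul_one, one_mul, ← WithOne.coe_mul, ne_eq,
        WithOne.coe_inj]
    exact TopologicalSpace.GenerateOpen.basic _ hmem
  refine discreteTopology_iff_isOpen_singleton.mpr ?_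
  rintro ⟨f, hf⟩
  have hf' : (supp f).encard = (n : ℕ∞) := hf
  rw [isOpen_induced_iff]
  -- the finite set S(F) and its elements other than f
  have Ffin : (supp f).Finite := hfin f
  have Gfin : {g : S | supp g ⊆ supp f}.Finite := hSF (supp f) Ffin
  set B : Finset S := Gfin.toFinset.erase f with hB
  -- witnesses
  have hW : ∀ p : X, p ∈ supp f → ∃ Hs : List S, Hs.length = n + 1 ∧
      (∀ h ∈ Hs, supp h ∩ (supp f \ {p}) = ∅ ∧ h * f ≠ f * h) ∧
      Hs.Pairwise (fun a b => (supp a \ supp f) ∩ (supp b \ supp f) = ∅) :=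
    fun p hp => exists_suppWitness_list supp hfin hperf f p hp (n + 1)
  choose! Hs hlen hmemW hpwW using hW
  set U : Set S := (⋂ g ∈ B, {x : S | x ≠ g}) ∩
      ⋂ p ∈ Ffin.toFinset, ⋂ h ∈ Hs p, {x : S | h * x ≠ x * h} with hU
  refine ⟨U, ?_, ?_⟩
  · -- U is open
    refine IsOpen.inter ?_ ?_
    · exact isOpen_biInter_finset (fun g _ => open_ne g)
    · refine isOpen_biInter_finset (fun p _ => ?_)
      exact Set.Finite.isOpen_biInter (Hs p).finite_toSet (fun h _ => open_comm h)
  · -- preimage is the singleton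
    rw [Set.eq_singleton_iff_unique_mem]
    constructor
    · -- f ∈ U
      show f ∈ U
      constructor
      · refine Set.mem_iInter₂.mpr (fun g hg => ?_)
        intro hfg
        exact (Finset.ne_of_mem_erase hg) hfg.symm
      · refine Set.mem_iInter₂.mpr (fun p hp => ?_)
        refine Set.mem_iInter₂.mpr (fun h hh => ?_)
        have hp' : p ∈ supp f := Ffin.mem_toFinset.mp hp
        exact (hmemW p hp' h hh).2
    · -- uniqueness
      rintro ⟨x, hx⟩ hxU
      have hx' : (supp x).encard = (n : ℕ∞) := hx
      have hxU' : x ∈ U := hxU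
      obtain ⟨hxB, hxC⟩ := hxU'
      -- Step 1 : supp f ⊆ supp x
      have hFsub : supp f ⊆ supp x := by
        intro p hp
        by_contra hpx
        -- all witnesses at p meet supp x
        have hne : ∀ h ∈ Hs p, (supp h ∩ supp x).Nonempty := by
          intro h hh
          by_contra hcon
          rw [Set.not_nonempty_iff_eq_empty] at hcon
          have : h * x = x * h := h2 h x hcon
          have hxh : h * x ≠ x * h := by
            have := Set.mem_iInter₂.mp hxC p (Ffin.mem_toFinset.mpr hp)
            exact Set.mem_iInter₂.mp this h hh
          exact hxh this
        -- the chosen points lie in (supp h \ supp f) ∩ supp x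
        have hpt : ∀ h ∈ Hs p, ∃ q, q ∈ (supp h \ supp f) ∧ q ∈ supp x := by
          intro h hh
          obtain ⟨q, hq1, hq2⟩ := hne h hh
          have hqF : q ∉ supp f := by
            intro hqf
            have h1' := (hmemW p hp h hh).1
            rw [Set.eq_empty_iff_forall_notMem] at h1'
            rcases eq_or_ne q p with rfl | hqp
            · exact hpx hq2
            · exact h1' q ⟨hq1, hqf, hqp⟩
          exact ⟨q, ⟨hq1, hqF⟩, hq2⟩
        -- nodup
        have hnd : (Hs p).Nodup := by
          refine nodup_of_pairwise_of_irrefl_mem (hpwW p hp) (fun a ha hRaa => ?_)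
          obtain ⟨q, hq1, _⟩ := hpt a ha
          rw [Set.inter_self, Set.eq_empty_iff_forall_notMem] at hRaa
          exact hRaa q hq1
        -- build injection into supp x
        set T : Finset S := (Hs p).toFinset with hT
        have hTcard : T.card = n + 1 := by
          rw [hT, List.toFinset_card_of_nodup hnd, hlen p hp]
        set φ : S → X := fun h =>
          if hh : ∃ q, q ∈ (supp h \ supp f) ∧ q ∈ supp x then hh.choose else p with hφ
        have hφmem : ∀ h ∈ T, φ h ∈ (hfin x).toFinset := by
          intro h hh
          have hh' : h ∈ Hs p := List.mem_toFinset.mp hh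
          have hex := hpt h hh'
          rw [hφ]
          simp only [dif_pos hex]
          exact (hfin x).mem_toFinset.mpr hex.choose_spec.2
        have hφoff : ∀ h ∈ T, φ h ∈ supp h \ supp f := by
          intro h hh
          have hh' : h ∈ Hs p := List.mem_toFinset.mp hh
          have hex := hpt h hh'
          rw [hφ]
          simp only [dif_pos hex]
          exact hex.choose_spec.1
        have hφinj : Set.InjOn φ ↑T := by
          intro a ha b hb hab
          by_contra hne'
          have hsymm : Symmetric (fun a b : S =>
              (supp a \ supp f) ∩ (supp b \ supp f) = ∅) := by
            intro a b hab'
            rwa [Set.inter_comm]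
          have hR := (haveI : Std.Symm (fun a b : S =>
              (supp a \ supp f) ∩ (supp b \ supp f) = ∅) := ⟨fun a b h => hsymm h⟩
            (hpwW p hp).forall (List.mem_toFinset.mp ha)
            (List.mem_toFinset.mp hb) hne')
          rw [Set.eq_empty_iff_forall_notMem] at hR
          exact hR (φ a) ⟨hφoff a ha, hab ▸ hφoff b hb⟩
        have hcard := Finset.card_le_card_of_injOn φ hφmem hφinj
        have hxcard : ((hfin x).toFinset.card : ℕ∞) = (n : ℕ∞) := by
          rw [← (hfin x).encard_eq_coe_toFinset_card, hx']
        have hxcard' : (hfin x).toFinset.card = n := by exact_mod_cast hxcard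
        rw [hTcard, hxcard'] at hcard
        omega
      -- Step 2 : supp x = supp f, hence x ∈ S(F)
      have heq : supp f = supp x :=
        (hfin x).eq_of_subset_of_encard_le' hFsub (by rw [hf', hx'])
      have hxG : x ∈ Gfin.toFinset := Gfin.mem_toFinset.mpr heq.symm.subset
      -- Step 3 : x = f
      have hxf : x = f := by
        by_contra hxf
        have hxB' : x ∈ B := Finset.mem_erase.mpr ⟨hxf, hxG⟩
        have := Set.mem_iInter₂.mp hxB x hxB'
        exact this rfl
      exact Subtype.ext hxf
end

section
/- Let (S, supp) be a supp-perfect semigroup with support map supp : S → Set X, where X = ⋃_{a∈S} supp(a). Then S endowed with its semi-Zariski topology Ζ is σ-discrete, i.e., S is a countable union of subspaces each of which is discrete in the subspace topology inherited from Ζ. -/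
lemma aux_discrete {α : Type*} (τ : TopologicalSpace α) (D : Set α)
    (h : ∀ x ∈ D, ∃ U : Set α, τ.IsOpen U ∧ U ∩ D = {x}) :
    @DiscreteTopology D (TopologicalSpace.induced Subtype.val τ) := by
  letI := τ
  letI tD : TopologicalSpace D := TopologicalSpace.induced Subtype.val τ
  have hop : ∀ a : D, IsOpen ({a} : Set D) := by
    rintro ⟨x, hx⟩
    obtain ⟨U, hU, hUD⟩ := h x hx
    have hset : ({⟨x, hx⟩} : Set D) = Subtype.val ⁻¹' U := by
      ext ⟨y, hy⟩
      simp only [Set.mem_singleton_iff, Set.mem_preimage, Subtype.mk.injEq]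
      constructor
      · intro h
        have hxU : x ∈ U ∩ D := by rw [hUD]; exact rfl
        rw [h]
        exact hxU.1
      · intro hyU
        have : y ∈ U ∩ D := ⟨hyU, hy⟩
        rw [hUD] at this
        exact this
    rw [hset]
    exact isOpen_induced_iff.mpr ⟨U, hU, rfl⟩
  exact discreteTopology_iff_isOpen_singleton.mpr hop

/-- Every supp-perfect semigroup is σ-discrete in its semi-Zariski topology. -/
theorem suppPerfect_sigmaDiscrete_semiZariski
    {S X : Type*} [Semigroup S] (supp : S → Set X)
    (h1 : ∀ f g : S, supp (f * g) ⊆ supp f ∪ supp g)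
    (h2 : ∀ f g : S, supp f ∩ supp g = ∅ → f * g = g * f)
    (hX : (⋃ a : S, supp a) = Set.univ)
    (hfin : ∀ f : S, (supp f).Finite)
    (hSF : ∀ F : Set X, F.Finite → {f : S | supp f ⊆ F}.Finite)
    (hperf : ∀ F : Set X, F.Finite →
      {f : S | supp f ⊆ F} = {g : S | ∀ f : S, supp f ⊆ Fᶜ → f * g = g * f}) :
    SigmaDiscrete (semiZariski S) := by
  classical
  letI τ := semiZariski S
  -- subbasic open sets
  have hopen1 : ∀ s : S, τ.IsOpen {y : S | y ≠ s} := by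
    intro s
    have he : {y : S | y ≠ s} =
        {y : S | (1 : WithOne S) * (y : WithOne S) * 1 ≠ (s : WithOne S)} := by
      ext y
      simp [WithOne.coe_inj]
    rw [he]
    exact TopologicalSpace.GenerateOpen.basic _
      (Set.mem_union_left _ ⟨1, 1, (s : WithOne S), rfl⟩)
  have hopen2 : ∀ g : S, τ.IsOpen {y : S | g * y ≠ y * g} := by
    intro g
    have he : {y : S | g * y ≠ y * g} =
        {y : S | (g : WithOne S) * (y : WithOne S) * 1 ≠
          1 * (y : WithOne S) * (g : WithOne S)} := by
      ext y
      simp [← WithOne.coe_mul, WithOne.coe_inj]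
    rw [he]
    exact TopologicalSpace.GenerateOpen.basic _
      (Set.mem_union_right _ ⟨(g : WithOne S), 1, 1, (g : WithOne S), rfl⟩)
  refine ⟨fun n => {x : S | (supp x).ncard = n}, ?_, ?_⟩
  · ext x
    simp only [Set.mem_iUnion, Set.mem_setOf_eq, Set.mem_univ, iff_true]
    exact ⟨(supp x).ncard, rfl⟩
  intro n
  apply aux_discrete
  intro f hf
  -- hf : (supp f).ncard = n
  simp only [Set.mem_setOf_eq] at hf
  -- Step 1: witnesses non-commuting with f avoiding any finite set not containing supp f
  have step1 : ∀ T : Set X, T.Finite → ¬ supp f ⊆ T →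
      ∃ g : S, supp g ∩ T = ∅ ∧ g * f ≠ f * g := by
    intro T hT hns
    have hp := hperf T hT
    have hf' : f ∉ {h : S | supp h ⊆ T} := hns
    rw [hp] at hf'
    simp only [Set.mem_setOf_eq, not_forall] at hf'
    obtain ⟨g, hg1, hg2⟩ := hf'
    refine ⟨g, ?_, hg2⟩
    exact Set.eq_empty_iff_forall_notMem.mpr fun p hp' => (hg1 hp'.1) hp'.2
  -- Step 2: for q ∈ supp f, arbitrarily many witnesses with supports pairwise meeting in {q}
  have step2 : ∀ q ∈ supp f, ∀ k : ℕ, ∃ L : Fin k → S,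
      (∀ i, q ∈ supp (L i) ∧ L i * f ≠ f * L i) ∧
      (∀ i j, i ≠ j → supp (L i) ∩ supp (L j) ⊆ {q}) := by
    intro q hq k
    induction k with
    | zero => exact ⟨Fin.elim0, fun i => i.elim0, fun i => i.elim0⟩
    | succ k ih =>
      obtain ⟨L, hL1, hL2⟩ := ih
      set T : Set X := (supp f \ {q}) ∪ ⋃ i, (supp (L i) \ {q}) with hTdef
      have hT : T.Finite :=
        ((hfin f).diff).union (Set.finite_iUnion fun i => (hfin _).diff)
      have hqT : q ∉ T := by
        simp [hTdef]
      have hns : ¬ supp f ⊆ T := fun h => hqT (h hq)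
      obtain ⟨g, hg1, hg2⟩ := step1 T hT hns
      have hmeet : supp g ∩ supp f ≠ ∅ := by
        intro he
        exact hg2 (h2 g f he)
      obtain ⟨p, hpg, hpf⟩ := Set.nonempty_iff_ne_empty.mpr hmeet
      have hpq : p = q := by
        by_contra hne
        have hpT : p ∈ T := Or.inl ⟨hpf, hne⟩
        exact (Set.eq_empty_iff_forall_notMem.mp hg1 p) ⟨hpg, hpT⟩
      have hqg : q ∈ supp g := hpq ▸ hpg
      have hgd : ∀ j, supp g ∩ supp (L j) ⊆ {q} := by
        intro j p' hp'
        by_contra hne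
        have hpT : p' ∈ T := Or.inr (Set.mem_iUnion.mpr ⟨j, hp'.2, hne⟩)
        exact (Set.eq_empty_iff_forall_notMem.mp hg1 p') ⟨hp'.1, hpT⟩
      refine ⟨Fin.cons g L, ?_, ?_⟩
      · intro i
        refine Fin.cases ?_ ?_ i
        · simpa using ⟨hqg, hg2⟩
        · intro j
          simpa using hL1 j
      · intro i j hij
        rcases Fin.eq_zero_or_eq_succ i with hi | ⟨i', rfl⟩
        · rcases Fin.eq_zero_or_eq_succ j with hj | ⟨j', rfl⟩
          · exact absurd (hi.trans hj.symm) hij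
          · subst hi
            simpa using hgd j'
        · rcases Fin.eq_zero_or_eq_succ j with hj | ⟨j', rfl⟩
          · subst hj
            simp only [Fin.cons_succ, Fin.cons_zero]
            rw [Set.inter_comm]
            exact hgd i'
          · simp only [Fin.cons_succ]
            exact hL2 i' j' (fun h => hij (by rw [h]))
  -- Step 3: choose witnesses
  have step2' : ∀ q : X, ∃ L : Fin (n+1) → S, q ∈ supp f →
      ((∀ i, q ∈ supp (L i) ∧ L i * f ≠ f * L i) ∧
       (∀ i j, i ≠ j → supp (L i) ∩ supp (L j) ⊆ {q})) := by
    intro q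
    by_cases hq : q ∈ supp f
    · obtain ⟨L, hL⟩ := step2 q hq (n+1)
      exact ⟨L, fun _ => hL⟩
    · exact ⟨fun _ => f, fun h => absurd h hq⟩
  choose W hW using step2'
  -- the isolating open set
  set E : Set S := {s : S | supp s ⊆ supp f} \ {f} with hEdef
  have hEfin : E.Finite := (hSF (supp f) (hfin f)).diff
  set U : Set S := (⋂ s ∈ E, {y : S | y ≠ s}) ∩
      (⋂ q ∈ supp f, ⋂ i : Fin (n+1), {y : S | W q i * y ≠ y * W q i}) with hUdef
  have hUopen : τ.IsOpen U := by
    letI := τ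
    apply IsOpen.inter
    · exact Set.Finite.isOpen_biInter hEfin fun s _ => hopen1 s
    · exact Set.Finite.isOpen_biInter (hfin f) fun q _ =>
        isOpen_iInter_of_finite fun i => hopen2 (W q i)
  have hfU : f ∈ U := by
    constructor
    · simp only [Set.mem_iInter, Set.mem_setOf_eq]
      intro s hs
      intro hfs
      exact hs.2 hfs.symm
    · simp only [Set.mem_iInter, Set.mem_setOf_eq]
      intro q hq i
      have := ((hW q hq).1 i).2
      exact this
  refine ⟨U, hUopen, ?_⟩
  ext x
  simp only [Set.mem_inter_iff, Set.mem_setOf_eq, Set.mem_singleton_iff]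
  constructor
  · rintro ⟨hxU, hxD⟩
    by_cases hsub : supp x ⊆ supp f
    · by_contra hne
      have hxE : x ∈ E := ⟨hsub, hne⟩
      have := hxU.1
      simp only [Set.mem_iInter, Set.mem_setOf_eq] at this
      exact this x hxE rfl
    · exfalso
      -- find q ∈ supp f \ supp x
      have hex : ∃ q ∈ supp f, q ∉ supp x := by
        by_contra hc
        push_neg at hc
        have hFsub : supp f ⊆ supp x := hc
        have heq : supp f = supp x :=
          Set.eq_of_subset_of_ncard_le hFsub (by rw [hxD, hf]) (hfin x)
        exact hsub (heq ▸ Set.Subset.rfl)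
      obtain ⟨q, hq, hqx⟩ := hex
      have hWq := hW q hq
      have hxU2 := hxU.2
      simp only [Set.mem_iInter, Set.mem_setOf_eq] at hxU2
      have hiW : ∀ i : Fin (n+1), (supp (W q i) ∩ supp x).Nonempty := by
        intro i
        rw [Set.nonempty_iff_ne_empty]
        intro he
        exact hxU2 q hq i (h2 (W q i) x he)
      choose p hp using hiW
      have pinj : Function.Injective p := by
        intro i j hij
        by_contra hne
        have hpi : p i ∈ supp (W q i) ∩ supp (W q j) :=
          ⟨(hp i).1, hij ▸ (hp j).1⟩
        have : p i = q := hWq.2 i j hne hpi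
        exact hqx (this ▸ (hp i).2)
      have hcard : (n+1) ≤ (supp x).ncard := by
        have h1c : (Finset.univ.image p).card = n+1 := by
          rw [Finset.card_image_of_injective _ pinj, Finset.card_univ, Fintype.card_fin]
        have h2c : ↑(Finset.univ.image p) ⊆ supp x := by
          intro a ha
          simp only [Finset.coe_image, Finset.coe_univ, Set.image_univ,
            Set.mem_range] at ha
          obtain ⟨i, rfl⟩ := ha
          exact (hp i).2
        calc (n+1) = ((Finset.univ.image p : Finset X) : Set X).ncard := by
              rw [Set.ncard_coe_finset, h1c]
          _ ≤ (supp x).ncard := Set.ncard_le_ncard h2c (hfin x)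
      rw [hxD] at hcard
      omega
  · rintro rfl
    exact ⟨hfU, hf⟩
end

section
/- Let (S, supp) be a supp-perfect semigroup with support map supp : S → Set X, where X = ⋃_{a∈S} supp(a). Then S is σ-discrete in every Hausdorff shift-invariant topology on S. -/
/-- Every supp-perfect semigroup is σ-discrete in each Hausdorff shift-invariant topology. -/
theorem suppPerfect_sigmaDiscrete_of_hausdorff_shift_invariant
    {S X : Type*} [Semigroup S] (supp : S → Set X)
    (h1 : ∀ f g : S, supp (f * g) ⊆ supp f ∪ supp g)
    (h2 : ∀ f g : S, supp f ∩ supp g = ∅ → f * g = g * f)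
    (hX : (⋃ a : S, supp a) = Set.univ)
    (hfin : ∀ f : S, (supp f).Finite)
    (hSF : ∀ F : Set X, F.Finite → {f : S | supp f ⊆ F}.Finite)
    (hperf : ∀ F : Set X, F.Finite →
      {f : S | supp f ⊆ F} = {g : S | ∀ f : S, supp f ⊆ Fᶜ → f * g = g * f})
    (τ : TopologicalSpace S) (hT2 : @T2Space S τ)
    (hleft : ∀ a : S, @Continuous _ _ τ τ (fun x => a * x))
    (hright : ∀ a : S, @Continuous _ _ τ τ (fun x => x * a)) :
    SigmaDiscrete τ := by
  classical
  letI := τ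
  haveI := hT2
  refine ⟨fun n => {x : S | (supp x).ncard = n}, ?_, ?_⟩
  · ext x
    simp only [Set.mem_iUnion, Set.mem_univ, iff_true, Set.mem_setOf_eq]
    exact ⟨(supp x).ncard, rfl⟩
  · intro n
    rw [discreteTopology_iff_isOpen_singleton]
    rintro ⟨f, hf⟩
    simp only [Set.mem_setOf_eq] at hf
    -- key downward induction
    have key : ∀ j : ℕ, ∀ G : Set X, G.Finite → supp f ⊆ G →
        ∃ U : Set S, IsOpen U ∧ f ∈ U ∧
          ∀ g, g ∈ U → (supp g).ncard = n → g ≠ f →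
            n < (supp g ∩ G).ncard + j → False := by
      intro j
      induction j with
      | zero =>
        intro G hGf hFG
        refine ⟨Set.univ, isOpen_univ, trivial, ?_⟩
        intro g _ hg _ hlt
        have hle : (supp g ∩ G).ncard ≤ (supp g).ncard :=
          Set.ncard_le_ncard Set.inter_subset_left (hfin g)
        omega
      | succ j ih =>
        intro G hGf hFG
        -- for each y in supp f, combine a witness with the inductive hypothesis
        have main : ∀ y, y ∈ supp f → ∃ V : Set S, IsOpen V ∧ f ∈ V ∧
            ∀ g, g ∈ V → (supp g).ncard = n → g ≠ f → y ∉ supp g →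
              n < (supp g ∩ G).ncard + (j + 1) → False := by
          intro y hy
          -- witness h not commuting with f, supported away from G \ {y}
          have hfnot : f ∉ {g : S | supp g ⊆ G \ {y}} := by
            intro hmem
            exact (hmem hy).2 rfl
          rw [hperf _ (hGf.diff (t := {y}))] at hfnot
          simp only [Set.mem_setOf_eq, not_forall] at hfnot
          obtain ⟨h, hh1, hh2⟩ := hfnot
          obtain ⟨W, hWo, hWm, hWp⟩ := ih (G ∪ supp h) (hGf.union (hfin h))
            (hFG.trans Set.subset_union_left)
          refine ⟨{x : S | h * x = x * h}ᶜ ∩ W, ?_, ⟨hh2, hWm⟩, ?_⟩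
          · exact ((isClosed_eq (hleft h) (hright h)).isOpen_compl).inter hWo
          · intro g hg hcard hne hyg hlt
            have hne' : h * g ≠ g * h := hg.1
            have hint : (supp h ∩ supp g).Nonempty := by
              rw [Set.nonempty_iff_ne_empty]
              intro he
              exact hne' (h2 h g he)
            obtain ⟨z, hz1, hz2⟩ := hint
            have hzG : z ∉ G := by
              intro hzG
              have := hh1 hz1
              simp only [Set.mem_compl_iff, Set.mem_diff, not_and, not_not] at this
              exact hyg (this hzG ▸ hz2)
            have hsub : insert z (supp g ∩ G) ⊆ supp g ∩ (G ∪ supp h) := by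
              intro w hw
              rcases Set.mem_insert_iff.mp hw with rfl | hw
              · exact ⟨hz2, Or.inr hz1⟩
              · exact ⟨hw.1, Or.inl hw.2⟩
            have hcard2 : (supp g ∩ G).ncard + 1 ≤ (supp g ∩ (G ∪ supp h)).ncard := by
              have h1' : (insert z (supp g ∩ G)).ncard = (supp g ∩ G).ncard + 1 :=
                Set.ncard_insert_of_notMem (fun hw => hzG hw.2) ((hfin g).inter_of_left _)
              have h2' : (insert z (supp g ∩ G)).ncard ≤ (supp g ∩ (G ∪ supp h)).ncard :=
                Set.ncard_le_ncard hsub ((hfin g).inter_of_left _)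
              omega
            exact hWp g hg.2 hcard hne (by omega)
        choose V hVo hVm hVp using main
        -- the finite closed set S(G) \ {f}
        have hKfin : ({g : S | supp g ⊆ G} \ {f}).Finite := (hSF G hGf).subset Set.diff_subset
        refine ⟨({g : S | supp g ⊆ G} \ {f})ᶜ ∩
          ⋂ (y : (hfin f).toFinset), V y ((hfin f).mem_toFinset.mp y.2), ?_, ?_, ?_⟩
        · exact (hKfin.isClosed.isOpen_compl).inter
            (isOpen_iInter_of_finite fun y => hVo _ _)
        · refine ⟨fun hc => hc.2 rfl, Set.mem_iInter.mpr fun y => hVm _ _⟩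
        · intro g hg hcard hne hlt
          by_cases hsub : supp f ⊆ supp g
          · have heq : supp f = supp g :=
              Set.eq_of_subset_of_ncard_le hsub (by rw [hcard, hf]) (hfin g)
            exact hg.1 ⟨by rw [Set.mem_setOf_eq, ← heq]; exact hFG, hne⟩
          · obtain ⟨y, hy, hyg⟩ := Set.not_subset.mp hsub
            have hgV := Set.mem_iInter.mp hg.2 ⟨y, (hfin f).mem_toFinset.mpr hy⟩
            exact hVp y ((hfin f).mem_toFinset.mp ((hfin f).mem_toFinset.mpr hy)) g hgV
              hcard hne hyg hlt
    obtain ⟨U, hUo, hUm, hUp⟩ := key (n + 1) (supp f) (hfin f) subset_rfl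
    have hset : ({(⟨f, hf⟩ : {x : S | (supp x).ncard = n})} :
        Set {x : S | (supp x).ncard = n}) = Subtype.val ⁻¹' U := by
      ext ⟨g, hg⟩
      simp only [Set.mem_singleton_iff, Set.mem_preimage, Subtype.mk.injEq]
      constructor
      · rintro rfl; exact hUm
      · intro hgU
        by_contra hne
        exact hUp g hgU hg hne (by omega)
    rw [hset]
    exact hUo.preimage continuous_subtype_val
end

section
/- Let G be a group and supp : G → Set X a map making (G, supp) a supp-perfect semigroup with X = ⋃_{a∈G} supp(a). Then every Baire Hausdorff shift-invariant topology on G is discrete. -/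
/-- Every perfectly supportable group is discrete in each Baire Hausdorff shift-invariant
topology. -/
theorem suppPerfect_group_discrete_of_baire_hausdorff_shift_invariant
    {G X : Type*} [Group G] (supp : G → Set X)
    (h1 : ∀ f g : G, supp (f * g) ⊆ supp f ∪ supp g)
    (h2 : ∀ f g : G, supp f ∩ supp g = ∅ → f * g = g * f)
    (hX : (⋃ a : G, supp a) = Set.univ)
    (hfin : ∀ f : G, (supp f).Finite)
    (hSF : ∀ F : Set X, F.Finite → {f : G | supp f ⊆ F}.Finite)
    (hperf : ∀ F : Set X, F.Finite →
      {f : G | supp f ⊆ F} = {g : G | ∀ f : G, supp f ⊆ Fᶜ → f * g = g * f})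
    (τ : TopologicalSpace G) (hT2 : @T2Space G τ)
    (hleft : ∀ a : G, @Continuous _ _ τ τ (fun x => a * x))
    (hright : ∀ a : G, @Continuous _ _ τ τ (fun x => x * a))
    (hBaire : ∀ U : ℕ → Set G, (∀ n, @IsOpen _ τ (U n)) → (∀ n, @Dense _ τ (U n)) →
      @Dense _ τ (⋂ n, U n)) :
    @DiscreteTopology G τ := by
  classical
  letI := τ
  haveI := hT2
  -- if some noncommuting pair, their supports meet
  have hmeet : ∀ f g : G, f * g ≠ g * f → (supp f ∩ supp g).Nonempty := by
    intro f g hfg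
    rcases Set.eq_empty_or_nonempty (supp f ∩ supp g) with h | h
    · exact absurd (h2 f g h) hfg
    · exact h
  -- from perfectness: if supp g ⊄ F then there is e supported outside F not commuting with g
  have hwitness : ∀ (F : Set X), F.Finite → ∀ g : G, ¬ supp g ⊆ F →
      ∃ e : G, supp e ⊆ Fᶜ ∧ e * g ≠ g * e := by
    intro F hF g hg
    have : g ∉ {f : G | supp f ⊆ F} := hg
    rw [hperf F hF] at this
    simp only [Set.mem_setOf_eq] at this
    push_neg at this
    obtain ⟨e, he1, he2⟩ := this
    exact ⟨e, he1, he2⟩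
  -- construction of pairwise disjointly supported non-commuting witnesses
  have hfam : ∀ g : G, ∀ s : Finset X, ↑s ⊆ supp g → ∃ f : X → G,
      (∀ x ∈ s, f x * g ≠ g * f x) ∧ (∀ x ∈ s, supp (f x) ∩ supp g ⊆ {x}) ∧
      (∀ x ∈ s, ∀ y ∈ s, x ≠ y → supp (f x) ∩ supp (f y) = ∅) := by
    intro g s
    induction s using Finset.induction_on with
    | empty =>
        intro _
        exact ⟨fun _ => 1, fun x hx => absurd hx (Finset.notMem_empty x),
          fun x hx => absurd hx (Finset.notMem_empty x),
          fun x hx => absurd hx (Finset.notMem_empty x)⟩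
    | @insert a s ha ih =>
        intro hsub
        have hsub' : (↑s : Set X) ⊆ supp g := by
          intro x hx
          exact hsub (by simpa using Or.inr hx)
        have hag : a ∈ supp g := hsub (by simp)
        obtain ⟨f, hf1, hf2, hf3⟩ := ih hsub'
        -- a is not in the support of any previously chosen f y
        have hanotin : ∀ y ∈ s, a ∉ supp (f y) := by
          intro y hy hcontra
          have : a ∈ supp (f y) ∩ supp g := ⟨hcontra, hag⟩
          have := hf2 y hy this
          simp only [Set.mem_singleton_iff] at this
          exact ha (this ▸ hy)
        set F : Set X := (supp g ∪ ⋃ y ∈ s, supp (f y)) \ {a} with hFdef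
        have hFfin : F.Finite := by
          have h1' : (supp g ∪ ⋃ y ∈ s, supp (f y)).Finite :=
            (hfin g).union (Set.Finite.biUnion s.finite_toSet (fun y _ => hfin (f y)))
          exact h1'.diff
        have hgnot : ¬ supp g ⊆ F := by
          intro hcon
          have := hcon hag
          simp [hFdef] at this
        obtain ⟨e, he1, he2⟩ := hwitness F hFfin g hgnot
        refine ⟨Function.update f a e, ?_, ?_, ?_⟩
        · intro x hx
          rcases Finset.mem_insert.1 hx with rfl | hx'
          · simpa using he2
          · have hxa : x ≠ a := fun h => ha (h ▸ hx')
            rw [Function.update_of_ne hxa]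
            exact hf1 x hx'
        · intro x hx z hz
          rcases Finset.mem_insert.1 hx with rfl | hx'
          · rw [Function.update_self] at hz
            obtain ⟨hze, hzg⟩ := hz
            have hzF := he1 hze
            by_contra hzx
            simp only [Set.mem_singleton_iff] at hzx
            exact hzF ⟨Or.inl hzg, hzx⟩
          · have hxa : x ≠ a := fun h => ha (h ▸ hx')
            rw [Function.update_of_ne hxa] at hz
            exact hf2 x hx' hz
        · intro x hx y hy hxy
          have key : ∀ u ∈ s, supp (Function.update f a e a) ∩ supp (Function.update f a e u) = ∅ := by
            intro u hu
            have hua : u ≠ a := fun h => ha (h ▸ hu)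
            rw [Function.update_self, Function.update_of_ne hua]
            ext z
            simp only [Set.mem_inter_iff, Set.mem_empty_iff_false, iff_false, not_and]
            intro hze hzu
            have hzF := he1 hze
            have hza : z ≠ a := fun h => hanotin u hu (h ▸ hzu)
            exact hzF ⟨Or.inr (Set.mem_biUnion hu hzu), hza⟩
          rcases Finset.mem_insert.1 hx with rfl | hx'
          · rcases Finset.mem_insert.1 hy with rfl | hy'
            · exact absurd rfl hxy
            · exact key y hy'
          · rcases Finset.mem_insert.1 hy with rfl | hy'
            · rw [Set.inter_comm]; exact key x hx'
            · have hxa2 : x ≠ a := by rintro rfl; exact ha hx'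
              have hya2 : y ≠ a := by rintro rfl; exact ha hy'
              rw [Function.update_of_ne hxa2, Function.update_of_ne hya2]
              exact hf3 x hx' y hy' hxy
  -- the sets S_n of elements with support of size ≤ n
  set Sn : ℕ → Set G := fun n => {g : G | ((hfin g).toFinset.card ≤ n)} with hSndef
  -- characterization of S_n via commutation
  have hchar : ∀ n : ℕ, Sn n = ⋂ (f : Fin (n+1) → G),
      ⋂ (_ : ∀ i j : Fin (n+1), i ≠ j → supp (f i) ∩ supp (f j) = ∅),
      ⋃ i, {g : G | f i * g = g * f i} := by
    intro n
    ext g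
    simp only [Set.mem_iInter, Set.mem_iUnion, Set.mem_setOf_eq]
    constructor
    · intro hg f hdisj
      by_contra hc
      push_neg at hc
      have hpick : ∀ i : Fin (n+1), ∃ z, z ∈ supp (f i) ∩ supp g := by
        intro i
        exact hmeet (f i) g (hc i)
      choose z hz using hpick
      have hzinj : Function.Injective z := by
        intro i j hij
        by_contra hne
        have : z i ∈ supp (f i) ∩ supp (f j) := ⟨(hz i).1, hij ▸ (hz j).1⟩
        rw [hdisj i j hne] at this
        exact this
      have hzsub : (Finset.univ.image z : Finset X) ⊆ (hfin g).toFinset := by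
        intro x hx
        obtain ⟨i, _, rfl⟩ := Finset.mem_image.1 hx
        exact (hfin g).mem_toFinset.2 (hz i).2
      have := Finset.card_le_card hzsub
      rw [Finset.card_image_of_injective _ hzinj, Finset.card_univ, Fintype.card_fin] at this
      have hg' : (hfin g).toFinset.card ≤ n := hg
      omega
    · intro hg
      by_contra hc
      simp only [hSndef, Set.mem_setOf_eq, not_le] at hc
      obtain ⟨s, hssub, hscard⟩ := Finset.exists_subset_card_eq hc
      have hssupp : (↑s : Set X) ⊆ supp g := by
        intro x hx
        exact (hfin g).mem_toFinset.1 (hssub hx)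
      obtain ⟨f, hf1, hf2, hf3⟩ := hfam g s hssupp
      -- index s by Fin (n+1)
      have hequiv := s.equivFin
      rw [hscard] at hequiv
      set σ : Fin (n+1) → X := fun i => (hequiv.symm i : X) with hσdef
      have hσmem : ∀ i, σ i ∈ s := fun i => (hequiv.symm i).2
      have hσinj : Function.Injective σ := by
        intro i j hij
        have := Subtype.ext hij
        exact hequiv.symm.injective this
      have hdisj : ∀ i j : Fin (n+1), i ≠ j → supp (f (σ i)) ∩ supp (f (σ j)) = ∅ := by
        intro i j hij
        exact hf3 (σ i) (hσmem i) (σ j) (hσmem j) (fun h => hij (hσinj h))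
      obtain ⟨i, hi⟩ := hg (fun i => f (σ i)) hdisj
      exact hf1 (σ i) (hσmem i) hi
  -- each S_n is closed
  have hclosed : ∀ n, IsClosed (Sn n) := by
    intro n
    rw [hchar n]
    refine isClosed_iInter (fun f => isClosed_iInter (fun _ => ?_))
    exact isClosed_iUnion_of_finite (fun i => isClosed_eq (hleft (f i)) (hright (f i)))
  -- Baire: some S_n has nonempty interior
  have hintr : ∃ n, (interior (Sn n)).Nonempty := by
    by_contra hc
    push_neg at hc
    have hopen : ∀ n, IsOpen (Sn n)ᶜ := fun n => (hclosed n).isOpen_compl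
    have hdense : ∀ n, Dense (Sn n)ᶜ := by
      intro n
      exact interior_eq_empty_iff_dense_compl.1 (hc n)
    have hD := hBaire (fun n => (Sn n)ᶜ) hopen hdense
    have hempty : (⋂ n, (Sn n)ᶜ) = ∅ := by
      ext g
      simp only [Set.mem_iInter, Set.mem_compl_iff, Set.mem_empty_iff_false, iff_false, not_forall,
        not_not]
      exact ⟨(hfin g).toFinset.card,
        show (hfin g).toFinset.card ≤ (hfin g).toFinset.card from le_rfl⟩
    rw [hempty] at hD
    obtain ⟨x, hx⟩ := hD.nonempty
    exact hx
  obtain ⟨n, hUne⟩ := hintr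
  set U : Set G := interior (Sn n) with hUdef
  have hUopen : IsOpen U := isOpen_interior
  have hUsub : U ⊆ Sn n := interior_subset
  -- pick u ∈ U with maximal support size
  set P : ℕ → Prop := fun k => ∃ u ∈ U, (hfin u).toFinset.card = k with hPdef
  obtain ⟨u0, hu0⟩ := hUne
  have hP0 : P ((hfin u0).toFinset.card) := ⟨u0, hu0, rfl⟩
  have hle0 : (hfin u0).toFinset.card ≤ n := hUsub hu0
  have hPmax := Nat.findGreatest_spec hle0 hP0
  obtain ⟨u, huU, hucard⟩ := hPmax
  have hmax : ∀ v ∈ U, (hfin v).toFinset.card ≤ (hfin u).toFinset.card := by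
    intro v hv
    rw [hucard]
    exact Nat.le_findGreatest (hUsub hv) ⟨v, hv, rfl⟩
  -- apply the family construction to the full support of u
  set s : Finset X := (hfin u).toFinset with hsdef
  have hssub : (↑s : Set X) ⊆ supp u := by
    intro x hx
    exact (hfin u).mem_toFinset.1 hx
  obtain ⟨f, hf1, hf2, hf3⟩ := hfam u s hssub
  set T : Set X := ⋃ x ∈ s, supp (f x) with hTdef
  have hTfin : T.Finite := Set.Finite.biUnion s.finite_toSet (fun x _ => hfin (f x))
  set U' : Set G := U ∩ ⋂ x ∈ s, {g : G | f x * g = g * f x}ᶜ with hU'def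
  have hU'open : IsOpen U' := by
    refine hUopen.inter (isOpen_biInter_finset (fun x _ => ?_))
    exact (isClosed_eq (hleft (f x)) (hright (f x))).isOpen_compl
  have huU' : u ∈ U' := by
    refine ⟨huU, ?_⟩
    simp only [Set.mem_iInter, Set.mem_compl_iff, Set.mem_setOf_eq]
    intro x hx
    exact hf1 x hx
  -- every element of U' has support inside T
  have hU'sub : U' ⊆ {g : G | supp g ⊆ T} := by
    intro g hg
    obtain ⟨hgU, hgcomm⟩ := hg
    simp only [Set.mem_iInter, Set.mem_compl_iff, Set.mem_setOf_eq] at hgcomm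
    have hpick : ∀ x ∈ s, ∃ z, z ∈ supp (f x) ∧ z ∈ supp g := by
      intro x hx
      obtain ⟨z, hz1, hz2⟩ := hmeet (f x) g (hgcomm x hx)
      exact ⟨z, hz1, hz2⟩
    choose q hq1 hq2 using hpick
    -- the image of q is all of supp g
    set img : Finset X := s.attach.image (fun x => q x.1 x.2) with himgdef
    have himgsub : img ⊆ (hfin g).toFinset := by
      intro z hz
      simp only [himgdef, Finset.mem_image] at hz
      obtain ⟨⟨x, hx⟩, _, rfl⟩ := hz
      exact (hfin g).mem_toFinset.2 (hq2 x hx)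
    have himgcard : img.card = s.card := by
      rw [himgdef, Finset.card_image_of_injective, Finset.card_attach]
      intro ⟨x, hx⟩ ⟨y, hy⟩ hxy
      simp only at hxy
      by_contra hne
      have hxyne : x ≠ y := fun h => hne (Subtype.ext h)
      have : q x hx ∈ supp (f x) ∩ supp (f y) := ⟨hq1 x hx, hxy ▸ hq1 y hy⟩
      rw [hf3 x hx y hy hxyne] at this
      exact this
    have hcardle : (hfin g).toFinset.card ≤ img.card := by
      rw [himgcard, hsdef]
      exact hmax g hgU
    have himgeq : img = (hfin g).toFinset := Finset.eq_of_subset_of_card_le himgsub hcardle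
    intro z hz
    have : z ∈ img := himgeq ▸ (hfin g).mem_toFinset.2 hz
    simp only [himgdef, Finset.mem_image] at this
    obtain ⟨⟨x, hx⟩, _, rfl⟩ := this
    exact Set.mem_biUnion hx (hq1 x hx)
  have hU'fin : U'.Finite := (hSF T hTfin).subset hU'sub
  -- an isolated point
  have hiso : IsOpen ({u} : Set G) := by
    have hdiff : U' \ {u} = U' ∩ ({x : G | x ≠ u}) := by
      ext x; simp [Set.mem_diff]
    have hclosed' : IsClosed (U' \ {u}) := Set.Finite.isClosed hU'fin.diff
    have : ({u} : Set G) = U' ∩ (U' \ {u})ᶜ := by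
      ext x
      simp only [Set.mem_singleton_iff, Set.mem_inter_iff, Set.mem_compl_iff, Set.mem_diff,
        not_and, not_not]
      constructor
      · rintro rfl; exact ⟨huU', fun _ => rfl⟩
      · rintro ⟨hx1, hx2⟩; exact hx2 hx1
    rw [this]
    exact hU'open.inter hclosed'.isOpen_compl
  -- transport by translations: every singleton is open
  rw [discreteTopology_iff_isOpen_singleton]
  intro a
  have : ({a} : Set G) = (fun x => (u * a⁻¹) * x) ⁻¹' {u} := by
    ext x
    simp only [Set.mem_singleton_iff, Set.mem_preimage]
    constructor
    · rintro rfl; group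
    · intro h
      have : a⁻¹ * x = 1 := by
        have := congrArg (fun y => u⁻¹ * y) h
        simpa [mul_assoc] using this
      calc x = a * (a⁻¹ * x) := by group
        _ = a := by rw [this, mul_one]
  rw [this]
  exact (hleft (u * a⁻¹)).isOpen_preimage _ hiso
end

section
/- Let X be an infinite set, let FRel(X) = {f ⊆ X × X : supp(f) is finite} be the semigroup of finitely supported relations under composition f∘g = {(x,z) : ∃ y, (x,y) ∈ f and (y,z) ∈ g}, where supp(f) = {x ∈ X : f(x) ≠ {x} or f⁻¹(x) ≠ {x}}. Let S ⊆ FRel(X) be a subsemigroup such that for each finite subset E ⊆ X and each point x ∈ X∖E there is g ∈ S with supp(g) ⊆ X∖E and x ∉ g(x) and g(x) ≠ ∅. Then for every finite subset F ⊆ X one has S(F) = Cent(S(X∖F)), where S(A) = {f ∈ S : supp(f) ⊆ A} and Cent(T) = {f ∈ S : ∀ g ∈ T, f∘g = g∘f}; in particular (S, supp) is a supp-perfect semigroup. -/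
/-- Composition of relations: `f ∘ g = {(x,z) : ∃ y, (x,y) ∈ f ∧ (y,z) ∈ g}`. -/
def relComp {X : Type*} (f g : Set (X × X)) : Set (X × X) :=
  {p : X × X | ∃ y : X, (p.1, y) ∈ f ∧ (y, p.2) ∈ g}

/-- The image `f(x) = {y : (x,y) ∈ f}` of a point under a relation. -/
def relImg {X : Type*} (f : Set (X × X)) (x : X) : Set X := {y : X | (x, y) ∈ f}

/-- The preimage `f⁻¹(x) = {y : (y,x) ∈ f}` of a point under a relation. -/
def relPre {X : Type*} (f : Set (X × X)) (x : X) : Set X := {y : X | (y, x) ∈ f}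

/-- The support of a relation: `supp f = {x : f(x) ≠ {x} or f⁻¹(x) ≠ {x}}`. -/
def relSupp {X : Type*} (f : Set (X × X)) : Set X :=
  {x : X | relImg f x ≠ {x} ∨ relPre f x ≠ {x}}

lemma left_mem_relSupp {X : Type*} {f : Set (X × X)} {x y : X}
    (h : (x, y) ∈ f) (hne : y ≠ x) : x ∈ relSupp f := by
  left
  intro he
  have : y ∈ relImg f x := h
  rw [he] at this
  exact hne this

lemma right_mem_relSupp {X : Type*} {f : Set (X × X)} {x y : X}
    (h : (x, y) ∈ f) (hne : x ≠ y) : y ∈ relSupp f := by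
  right
  intro he
  have : x ∈ relPre f y := h
  rw [he] at this
  exact hne this

lemma mem_iff_left_of_not_supp {X : Type*} {f : Set (X × X)} {x : X}
    (h : x ∉ relSupp f) (y : X) : (x, y) ∈ f ↔ y = x := by
  simp only [relSupp, Set.mem_setOf_eq, not_or, not_not] at h
  have : (y ∈ relImg f x) ↔ y ∈ ({x} : Set X) := by rw [h.1]
  simpa [relImg] using this

lemma mem_iff_right_of_not_supp {X : Type*} {f : Set (X × X)} {x : X}
    (h : x ∉ relSupp f) (y : X) : (y, x) ∈ f ↔ y = x := by
  simp only [relSupp, Set.mem_setOf_eq, not_or, not_not] at h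
  have : (y ∈ relPre f x) ↔ y ∈ ({x} : Set X) := by rw [h.2]
  simpa [relPre] using this

lemma relComp_subset_of_disjoint {X : Type*} {f g : Set (X × X)}
    (h : Disjoint (relSupp f) (relSupp g)) : relComp f g ⊆ relComp g f := by
  rintro ⟨x, z⟩ ⟨y, hxy, hyz⟩
  by_cases hyx : y = x
  · subst hyx
    by_cases hzy : z = y
    · subst hzy
      exact ⟨z, hyz, hxy⟩
    · -- y ≠ z, so y, z ∈ supp g, hence z ∉ supp f
      have hzs : z ∈ relSupp g := right_mem_relSupp hyz (fun he => hzy he.symm)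
      have hzf : z ∉ relSupp f := Set.disjoint_right.mp h hzs
      exact ⟨z, hyz, (mem_iff_left_of_not_supp hzf z).mpr rfl⟩
  · -- x ≠ y, so x, y ∈ supp f, hence y ∉ supp g, so z = y
    have hxs : x ∈ relSupp f := left_mem_relSupp hxy hyx
    have hys : y ∈ relSupp f := right_mem_relSupp hxy (fun he => hyx he.symm)
    have hyg : y ∉ relSupp g := Set.disjoint_left.mp h hys
    have hzy : z = y := (mem_iff_left_of_not_supp hyg z).mp hyz
    subst hzy
    have hxg : x ∉ relSupp g := Set.disjoint_left.mp h hxs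
    exact ⟨x, (mem_iff_left_of_not_supp hxg x).mpr rfl, hxy⟩

lemma relComp_comm_of_disjoint {X : Type*} {f g : Set (X × X)}
    (h : Disjoint (relSupp f) (relSupp g)) : relComp f g = relComp g f :=
  Set.Subset.antisymm (relComp_subset_of_disjoint h) (relComp_subset_of_disjoint h.symm)

/-- Let `S` be a subsemigroup of the semigroup `FRel X` of finitely supported relations on an
infinite set `X` such that for each finite `E ⊆ X` and each `x ∉ E` there is `g ∈ S` with
`supp g ⊆ X∖E`, `x ∉ g(x)` and `g(x) ≠ ∅`. Then `S(F) = Cent(S(X∖F))` for every finite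
`F ⊆ X`; in particular, together with the finiteness of each `S(F)`, `(S, supp)` is a
supp-perfect semigroup. -/
theorem subsemigroup_of_FRel_suppPerfect {X : Type*} [Infinite X]
    (S : Set (Set (X × X)))
    (hmul : ∀ f ∈ S, ∀ g ∈ S, relComp f g ∈ S)
    (hfin : ∀ f ∈ S, (relSupp f).Finite)
    (hmove : ∀ E : Set X, E.Finite → ∀ x ∉ E, ∃ g ∈ S,
      relSupp g ⊆ Eᶜ ∧ x ∉ relImg g x ∧ (relImg g x).Nonempty) :
    (∀ F : Set X, F.Finite →
      {f ∈ S | relSupp f ⊆ F} =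
        {f ∈ S | ∀ g ∈ S, relSupp g ⊆ Fᶜ → relComp f g = relComp g f}) ∧
    (∀ F : Set X, F.Finite → {f ∈ S | relSupp f ⊆ F}.Finite) := by
  constructor
  · intro F hF
    ext f
    simp only [Set.mem_setOf_eq]
    constructor
    · rintro ⟨hfS, hsupp⟩
      refine ⟨hfS, fun g hgS hgsupp => ?_⟩
      apply relComp_comm_of_disjoint
      exact Set.disjoint_left.mpr fun t ht hg => (hgsupp hg) (hsupp ht)
    · rintro ⟨hfS, hcomm⟩
      refine ⟨hfS, fun x hx => ?_⟩
      by_contra hxF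
      -- choose g moving x, supported outside E = (supp f ∪ F) \ {x}
      set E : Set X := (relSupp f ∪ F) \ {x} with hE
      have hEfin : E.Finite := (((hfin f hfS).union hF)).diff
      have hxE : x ∉ E := fun h => h.2 rfl
      obtain ⟨g, hgS, hgE, hxg, w, hw⟩ := hmove E hEfin x hxE
      have hwx : w ≠ x := fun h => hxg (h ▸ hw)
      have hxw : (x, w) ∈ g := hw
      -- supp g meets supp f ∪ F only possibly in x
      have hinter : ∀ t, t ∈ relSupp g → t ≠ x → t ∉ relSupp f ∧ t ∉ F := by
        intro t htg htx
        have : t ∉ E := hgE htg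
        constructor
        · intro htf; exact this ⟨Or.inl htf, htx⟩
        · intro htF; exact this ⟨Or.inr htF, htx⟩
      have hgF : relSupp g ⊆ Fᶜ := by
        intro t htg
        by_cases htx : t = x
        · subst htx; exact hxF
        · exact (hinter t htg htx).2
      have hc : relComp f g = relComp g f := hcomm g hgS hgF
      have hwg : w ∈ relSupp g := right_mem_relSupp hxw (fun h => hwx h.symm)
      have hwf : w ∉ relSupp f := (hinter w hwg hwx).1
      have hww : (w, w) ∈ f := (mem_iff_left_of_not_supp hwf w).mpr rfl
      -- now case analysis on why x ∈ supp f
      rcases hx with hImg | hPre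
      · by_cases hy : ∃ y, (x, y) ∈ f ∧ y ≠ x
        · obtain ⟨y, hxy, hyx⟩ := hy
          have hyf : y ∈ relSupp f := right_mem_relSupp hxy (fun h => hyx h.symm)
          have hyg : y ∉ relSupp g := by
            intro hyg
            exact (hinter y hyg hyx).1 hyf
          have hyy : (y, y) ∈ g := (mem_iff_left_of_not_supp hyg y).mpr rfl
          have h1 : ((x, y) : X × X) ∈ relComp f g := ⟨y, hxy, hyy⟩
          rw [hc] at h1
          obtain ⟨t, hxt, hty⟩ := h1
          have htx : t ≠ x := fun h => hxg (h ▸ hxt)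
          have htg : t ∈ relSupp g := right_mem_relSupp hxt (fun h => htx h.symm)
          have htf : t ∉ relSupp f := (hinter t htg htx).1
          have : y = t := (mem_iff_left_of_not_supp htf y).mp hty
          exact hyg (this ▸ htg)
        · push_neg at hy
          have hxx : (x, x) ∉ f := by
            intro hxx
            apply hImg
            ext y
            simp only [relImg, Set.mem_setOf_eq, Set.mem_singleton_iff]
            exact ⟨fun h => hy y h, fun h => h ▸ hxx⟩
          have h1 : ((x, w) : X × X) ∈ relComp g f := ⟨w, hxw, hww⟩
          rw [← hc] at h1
          obtain ⟨t, hxt, _⟩ := h1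
          rcases eq_or_ne t x with rfl | htx
          · exact hxx hxt
          · exact htx (hy t hxt)
      · by_cases hy : ∃ y, (y, x) ∈ f ∧ y ≠ x
        · obtain ⟨y, hyx, hyne⟩ := hy
          have hyf : y ∈ relSupp f := left_mem_relSupp hyx (fun h => hyne h.symm)
          have hyg : y ∉ relSupp g := by
            intro hyg
            exact (hinter y hyg hyne).1 hyf
          have h1 : ((y, w) : X × X) ∈ relComp f g := ⟨x, hyx, hxw⟩
          rw [hc] at h1
          obtain ⟨t, hyt, htw⟩ := h1
          have hty : t = y := (mem_iff_left_of_not_supp hyg t).mp hyt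
          subst hty
          have : t = w := (mem_iff_right_of_not_supp hwf t).mp htw
          exact hyg (this ▸ hwg)
        · push_neg at hy
          have hxx : (x, x) ∉ f := by
            intro hxx
            apply hPre
            ext y
            simp only [relPre, Set.mem_setOf_eq, Set.mem_singleton_iff]
            exact ⟨fun h => hy y h, fun h => h ▸ hxx⟩
          have h1 : ((x, w) : X × X) ∈ relComp g f := ⟨w, hxw, hww⟩
          rw [← hc] at h1
          obtain ⟨t, hxt, htw⟩ := h1
          rcases eq_or_ne t x with rfl | htx
          · exact hxx hxt
          · have htf : t ∈ relSupp f := right_mem_relSupp hxt (fun h => htx h.symm)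
            have htg : t ∉ relSupp g := by
              intro htg
              exact (hinter t htg htx).1 htf
            have : w = t := (mem_iff_left_of_not_supp htg w).mp htw
            exact hwf (this ▸ htf)
  · intro F hF
    have key : ∀ h ∈ {f ∈ S | relSupp f ⊆ F},
        h = (h ∩ F ×ˢ F) ∪ {p : X × X | p.1 = p.2 ∧ p.1 ∉ F} := by
      rintro h ⟨_, hsupp⟩
      ext ⟨a, b⟩
      simp only [Set.mem_union, Set.mem_inter_iff, Set.mem_prod, Set.mem_setOf_eq]
      constructor
      · intro hab
        by_cases hne : a = b
        · subst hne
          by_cases haF : a ∈ F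
          · exact Or.inl ⟨hab, haF, haF⟩
          · exact Or.inr ⟨rfl, haF⟩
        · have haF : a ∈ F := hsupp (left_mem_relSupp hab (fun h => hne h.symm))
          have hbF : b ∈ F := hsupp (right_mem_relSupp hab hne)
          exact Or.inl ⟨hab, haF, hbF⟩
      · rintro (⟨hab, _⟩ | ⟨heq, hna⟩)
        · exact hab
        · have hna' : a ∉ relSupp h := fun hmem => hna (hsupp hmem)
          have : (a, a) ∈ h := (mem_iff_left_of_not_supp hna' a).mpr rfl
          exact heq ▸ this
    apply Set.Finite.of_finite_image (f := fun f => f ∩ F ×ˢ F)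
    · apply Set.Finite.subset (Set.Finite.finite_subsets (hF.prod hF))
      rintro _ ⟨f, _, rfl⟩
      exact Set.inter_subset_right
    · intro f hf g hg he
      have he' : f ∩ F ×ˢ F = g ∩ F ×ˢ F := he
      rw [key f hf, key g hg, he']
end
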